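/- arXiv:2404.04553 — 9 statements merged into one kernel-verified Lean document; each statement's English description precedes it below -/
import Mathlib

section
/- Let A = A0 + A1ε ∈ DQ^{n×k}, B = B0 + B1ε ∈ DQ^{l×m}, C = C0 + C1ε ∈ DQ^{n×m} be dual quaternion matrices. Set A11 = A1·L_{A0}, A2 = R_{A0}·A11, C3 = −R_{A0}·C0, B2 = R_{B0}·B1, A4 = R_{A2}·R_{A0}, C4 = A4·(A1·A0†·C0 + C0·B0†·B1 − C1), B3 = B2·L_{B0}, B4 = C4·L_{B0}. Then the dual quaternion matrix equation AX − YB = C has a solution X ∈ DQ^{k×m}, Y ∈ DQ^{n×l} if and only if C3·L_{B0} = 0 and B4·L_{B3} = 0. -/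
open Matrix
set_option maxHeartbeats 1000000

/-- Quaternion matrices of size `p × q`. -/
abbrev QM (p q : ℕ) := Matrix (Fin p) (Fin q) (Quaternion ℝ)

/-- `Ad` is a Moore–Penrose inverse of the quaternion matrix `A`. -/
def IsMP {p q : ℕ} (A : QM p q) (Ad : QM q p) : Prop :=
  A * Ad * A = A ∧ Ad * A * Ad = Ad ∧ (A * Ad)ᴴ = A * Ad ∧ (Ad * A)ᴴ = Ad * A

/-- The dual quaternion matrix `A0 + A1 ε`, realized as a matrix over the
dual numbers (dual quaternions) `DualNumber (Quaternion ℝ)`. -/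
noncomputable def dm {p q : ℕ} (A0 A1 : QM p q) :
    Matrix (Fin p) (Fin q) (DualNumber (Quaternion ℝ)) :=
  A0.map TrivSqZeroExt.inl + A1.map TrivSqZeroExt.inr

/-- The rank of a quaternion matrix: the dimension (over `ℍ`) of the left
`ℍ`-submodule spanned by its rows. -/
noncomputable def qrank {m n : Type*} (A : Matrix m n (Quaternion ℝ)) : ℕ :=
  Module.finrank (Quaternion ℝ)
    (Submodule.span (Quaternion ℝ) (Set.range (fun i : m => fun j : n => A i j)))

lemma dm_fst {p q : ℕ} (A0 A1 : QM p q) (i : Fin p) (j : Fin q) :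
    TrivSqZeroExt.fst (dm A0 A1 i j) = A0 i j := by
  simp only [dm, Matrix.add_apply, Matrix.map_apply, TrivSqZeroExt.fst_add,
    TrivSqZeroExt.fst_inl, TrivSqZeroExt.fst_inr, add_zero]

lemma dm_snd {p q : ℕ} (A0 A1 : QM p q) (i : Fin p) (j : Fin q) :
    TrivSqZeroExt.snd (dm A0 A1 i j) = A1 i j := by
  simp only [dm, Matrix.add_apply, Matrix.map_apply, TrivSqZeroExt.snd_add,
    TrivSqZeroExt.snd_inl, TrivSqZeroExt.snd_inr, zero_add]

lemma dm_mul {p q r : ℕ} (A0 A1 : QM p q) (B0 B1 : QM q r) :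
    dm A0 A1 * dm B0 B1 = dm (A0 * B0) (A0 * B1 + A1 * B0) := by
  refine Matrix.ext fun i j => TrivSqZeroExt.ext ?_ ?_
  · rw [Matrix.mul_apply, TrivSqZeroExt.fst_sum, dm_fst, Matrix.mul_apply]
    refine Finset.sum_congr rfl fun t _ => ?_
    rw [TrivSqZeroExt.fst_mul, dm_fst, dm_fst]
  · rw [Matrix.mul_apply, TrivSqZeroExt.snd_sum, dm_snd, Matrix.add_apply,
      Matrix.mul_apply, Matrix.mul_apply, ← Finset.sum_add_distrib]
    refine Finset.sum_congr rfl fun t _ => ?_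
    rw [TrivSqZeroExt.snd_mul, dm_fst, dm_fst, dm_snd, dm_snd, smul_eq_mul,
      MulOpposite.smul_eq_mul_unop, MulOpposite.unop_op]

lemma dm_sub {p q : ℕ} (A0 A1 B0 B1 : QM p q) :
    dm A0 A1 - dm B0 B1 = dm (A0 - B0) (A1 - B1) := by
  refine Matrix.ext fun i j => TrivSqZeroExt.ext ?_ ?_
  · rw [Matrix.sub_apply, TrivSqZeroExt.fst_sub, dm_fst, dm_fst, dm_fst, Matrix.sub_apply]
  · rw [Matrix.sub_apply, TrivSqZeroExt.snd_sub, dm_snd, dm_snd, dm_snd, Matrix.sub_apply]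

lemma dm_inj {p q : ℕ} {A0 A1 B0 B1 : QM p q} (h : dm A0 A1 = dm B0 B1) :
    A0 = B0 ∧ A1 = B1 := by
  constructor <;> refine Matrix.ext fun i j => ?_
  · rw [← dm_fst A0 A1 i j, h, dm_fst]
  · rw [← dm_snd A0 A1 i j, h, dm_snd]

lemma dm_surj {p q : ℕ} (X : Matrix (Fin p) (Fin q) (DualNumber (Quaternion ℝ))) :
    X = dm (X.map TrivSqZeroExt.fst) (X.map TrivSqZeroExt.snd) := by
  refine Matrix.ext fun i j => TrivSqZeroExt.ext ?_ ?_
  · rw [dm_fst]; rfl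
  · rw [dm_snd]; rfl

/-- Bridge: the dual equation is equivalent to a pair of quaternion equations. -/
lemma bridge {n k l m : ℕ} (A0 A1 : QM n k) (B0 B1 : QM l m) (C0 C1 : QM n m) :
    (∃ (X : Matrix (Fin k) (Fin m) (DualNumber (Quaternion ℝ)))
       (Y : Matrix (Fin n) (Fin l) (DualNumber (Quaternion ℝ))),
        dm A0 A1 * X - Y * dm B0 B1 = dm C0 C1) ↔
      (∃ (X0 X1 : QM k m) (Y0 Y1 : QM n l),
        A0 * X0 - Y0 * B0 = C0 ∧
        A0 * X1 + A1 * X0 - (Y0 * B1 + Y1 * B0) = C1) := by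
  constructor
  · rintro ⟨X, Y, hXY⟩
    rw [dm_surj X, dm_surj Y, dm_mul, dm_mul, dm_sub] at hXY
    obtain ⟨e1, e2⟩ := dm_inj hXY
    exact ⟨_, _, _, _, e1, e2⟩
  · rintro ⟨X0, X1, Y0, Y1, e1, e2⟩
    exact ⟨dm X0 X1, dm Y0 Y1, by rw [dm_mul, dm_mul, dm_sub, e1, e2]⟩

section helpers

variable {a b c d e : ℕ}

lemma assoc2 {X : QM a b} {Y : QM b c} {Z : QM a c} (h : X * Y = Z) (M : QM c d) :
    X * (Y * M) = Z * M := by rw [← Matrix.mul_assoc, h]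

lemma assoc3 {X : QM a b} {Y : QM b c} {Z : QM c d} {W : QM a d}
    (h : X * Y * Z = W) (M : QM d e) : X * (Y * (Z * M)) = W * M := by
  rw [← Matrix.mul_assoc Y Z M, ← Matrix.mul_assoc X (Y * Z) M,
    ← Matrix.mul_assoc X Y Z, h]

lemma assoc3' {X : QM a b} {Y : QM b c} {Z : QM c d} {W : QM a d}
    (h : X * Y * Z = W) : X * (Y * Z) = W := by
  rw [← Matrix.mul_assoc, h]

end helpers

/-- Baksalary–Kala: solvability of `A X - Y B = C`. -/
lemma bk {p q r s : ℕ} (A : QM p q) (Ad : QM q p) (hA : IsMP A Ad)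
    (B : QM r s) (Bd : QM s r) (hB : IsMP B Bd) (C : QM p s) :
    (∃ (X : QM q s) (Y : QM p r), A * X - Y * B = C) ↔
      (1 - A * Ad) * C * (1 - Bd * B) = 0 := by
  have h1 : (1 - A * Ad) * A = 0 := by
    rw [Matrix.sub_mul, Matrix.one_mul, hA.1, sub_self]
  have h2 : B * (1 - Bd * B) = 0 := by
    rw [Matrix.mul_sub, Matrix.mul_one, ← Matrix.mul_assoc, hB.1, sub_self]
  constructor
  · rintro ⟨X, Y, rfl⟩
    rw [Matrix.mul_sub (1 - A * Ad) (A * X) (Y * B),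
      ← Matrix.mul_assoc (1 - A * Ad) A X, h1, Matrix.zero_mul, zero_sub,
      Matrix.neg_mul, Matrix.mul_assoc (1 - A * Ad) (Y * B) (1 - Bd * B),
      Matrix.mul_assoc Y B (1 - Bd * B), h2, Matrix.mul_zero, Matrix.mul_zero, neg_zero]
  · intro h
    refine ⟨Ad * C, -((1 - A * Ad) * C * Bd), ?_⟩
    have h3 : (1 - A * Ad) * C * Bd * B = (1 - A * Ad) * C := by
      rw [Matrix.mul_sub, Matrix.mul_one, sub_eq_zero] at h
      rw [Matrix.mul_assoc ((1 - A * Ad) * C) Bd B]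
      exact h.symm
    rw [Matrix.neg_mul, sub_neg_eq_add, h3, Matrix.sub_mul, Matrix.one_mul,
      ← Matrix.mul_assoc A Ad C]
    abel

theorem quat_iff {n k l m : ℕ}
    (A0 A1 : QM n k) (B0 B1 : QM l m) (C0 C1 : QM n m)
    (A0d : QM k n) (hA0d : IsMP A0 A0d)
    (B0d : QM m l) (hB0d : IsMP B0 B0d)
    (A11 : QM n k) (hA11 : A11 = A1 * (1 - A0d * A0))
    (A2 : QM n k) (hA2 : A2 = (1 - A0 * A0d) * A11)
    (A2d : QM k n) (hA2d : IsMP A2 A2d)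
    (C3 : QM n m) (hC3 : C3 = -((1 - A0 * A0d) * C0))
    (B2 : QM l m) (hB2 : B2 = (1 - B0 * B0d) * B1)
    (A4 : QM n n) (hA4 : A4 = (1 - A2 * A2d) * (1 - A0 * A0d))
    (C4 : QM n m) (hC4 : C4 = A4 * (A1 * A0d * C0 + C0 * B0d * B1 - C1))
    (B3 : QM l m) (hB3 : B3 = B2 * (1 - B0d * B0))
    (B3d : QM m l) (hB3d : IsMP B3 B3d)
    (B4 : QM n m) (hB4 : B4 = C4 * (1 - B0d * B0)) :
    (∃ (X0 X1 : QM k m) (Y0 Y1 : QM n l),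
        A0 * X0 - Y0 * B0 = C0 ∧
        A0 * X1 + A1 * X0 - (Y0 * B1 + Y1 * B0) = C1) ↔
      (C3 * (1 - B0d * B0) = 0 ∧ B4 * (1 - B3d * B3) = 0) := by
  -- basic reductions
  have r1 : ∀ {e : ℕ} (M : QM k e), A0 * (A0d * (A0 * M)) = A0 * M := fun M => assoc3 hA0d.1 M
  have r1' : A0 * (A0d * A0) = A0 := assoc3' hA0d.1
  have r2 : ∀ {e : ℕ} (M : QM m e), B0 * (B0d * (B0 * M)) = B0 * M := fun M => assoc3 hB0d.1 M
  have r2' : B0 * (B0d * B0) = B0 := assoc3' hB0d.1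
  have r3 : ∀ {e : ℕ} (M : QM k e), A2 * (A2d * (A2 * M)) = A2 * M := fun M => assoc3 hA2d.1 M
  have r3' : A2 * (A2d * A2) = A2 := assoc3' hA2d.1
  have r4 : ∀ {e : ℕ} (M : QM m e), B3 * (B3d * (B3 * M)) = B3 * M := fun M => assoc3 hB3d.1 M
  have r4' : B3 * (B3d * B3) = B3 := assoc3' hB3d.1
  have hPA0 : (1 - A0 * A0d) * A0 = 0 := by
    rw [Matrix.sub_mul, Matrix.one_mul, hA0d.1, sub_self]
  have hA0LA : A0 * (1 - A0d * A0) = 0 := by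
    rw [Matrix.mul_sub, Matrix.mul_one, ← Matrix.mul_assoc, hA0d.1, sub_self]
  have hB0Q : B0 * (1 - B0d * B0) = 0 := by
    rw [Matrix.mul_sub, Matrix.mul_one, ← Matrix.mul_assoc, hB0d.1, sub_self]
  have hRBB0 : (1 - B0 * B0d) * B0 = 0 := by
    rw [Matrix.sub_mul, Matrix.one_mul, Matrix.mul_assoc, ← Matrix.mul_assoc, hB0d.1, sub_self]
  have haa : A0 * A0d * (A0 * A0d) = A0 * A0d := by
    rw [← Matrix.mul_assoc, hA0d.1]
  have hbb : B0d * B0 * (B0d * B0) = B0d * B0 := by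
    rw [← Matrix.mul_assoc, hB0d.2.1]
  have hPP : (1 - A0 * A0d) * (1 - A0 * A0d) = (1 - A0 * A0d) := by
    simp only [Matrix.mul_sub, Matrix.sub_mul, Matrix.mul_one, Matrix.one_mul, haa]
    abel
  have hQQ : (1 - B0d * B0) * (1 - B0d * B0) = (1 - B0d * B0) := by
    simp only [Matrix.mul_sub, Matrix.sub_mul, Matrix.mul_one, Matrix.one_mul, hbb]
    abel
  have hPA2 : (1 - A0 * A0d) * A2 = A2 := by
    rw [hA2, ← Matrix.mul_assoc, hPP]
  have hPA1LA : (1 - A0 * A0d) * (A1 * (1 - A0d * A0)) = A2 := by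
    rw [hA2, hA11]
  constructor
  · rintro ⟨X0, X1, Y0, Y1, e1, e2⟩
    have key : (1 - A0 * A0d) * (A1 * A0d * C0 + C0 * B0d * B1 - C1) * (1 - B0d * B0)
        = -(A2 * (X0 * (1 - B0d * B0))) + (1 - A0 * A0d) * Y0 * B3 := by
      rw [hA2, hA11, hB3, hB2, ← e1, ← e2]
      simp only [Matrix.mul_add, Matrix.add_mul, Matrix.mul_sub, Matrix.sub_mul,
        Matrix.mul_one, Matrix.one_mul, Matrix.mul_assoc, r1, r1', r2, r2']
      abel
    constructor
    · rw [hC3, Matrix.neg_mul, neg_eq_zero, ← e1]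
      simp only [Matrix.mul_sub, Matrix.sub_mul, Matrix.mul_one, Matrix.one_mul,
        Matrix.mul_assoc, r1, r1', r2, r2']
      abel
    · rw [hB4, hC4, hA4,
        Matrix.mul_assoc (1 - A2 * A2d) (1 - A0 * A0d) (A1 * A0d * C0 + C0 * B0d * B1 - C1),
        Matrix.mul_assoc (1 - A2 * A2d)
          ((1 - A0 * A0d) * (A1 * A0d * C0 + C0 * B0d * B1 - C1)) (1 - B0d * B0),
        key]
      simp only [Matrix.mul_add, Matrix.add_mul, Matrix.mul_neg, Matrix.neg_mul,
        Matrix.mul_sub, Matrix.sub_mul, Matrix.one_mul, Matrix.mul_one, Matrix.mul_assoc,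
        r1, r1', r2, r2', r3, r3', r4, r4']
      abel
  · rintro ⟨g1, g2⟩
    have hC0Q : (1 - A0 * A0d) * C0 * (1 - B0d * B0) = 0 := by
      rw [hC3, Matrix.neg_mul, neg_eq_zero] at g1
      exact g1
    obtain ⟨T, hT⟩ : ∃ T, T = (1 - A0 * A0d) * (A1 * A0d * C0 + C0 * B0d * B1 - C1)
        * (1 - B0d * B0) := ⟨_, rfl⟩
    have hTQ : T * (1 - B0d * B0) = T := by
      rw [hT, Matrix.mul_assoc
        ((1 - A0 * A0d) * (A1 * A0d * C0 + C0 * B0d * B1 - C1)) (1 - B0d * B0) (1 - B0d * B0),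
        hQQ]
    have hPT : (1 - A0 * A0d) * T = T := by
      rw [hT, ← Matrix.mul_assoc (1 - A0 * A0d)
        ((1 - A0 * A0d) * (A1 * A0d * C0 + C0 * B0d * B1 - C1)) (1 - B0d * B0),
        ← Matrix.mul_assoc (1 - A0 * A0d) (1 - A0 * A0d)
          (A1 * A0d * C0 + C0 * B0d * B1 - C1), hPP]
    have hB4T : B4 = (1 - A2 * A2d) * T := by
      rw [hB4, hC4, hA4,
        Matrix.mul_assoc (1 - A2 * A2d) (1 - A0 * A0d) (A1 * A0d * C0 + C0 * B0d * B1 - C1),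
        Matrix.mul_assoc (1 - A2 * A2d)
          ((1 - A0 * A0d) * (A1 * A0d * C0 + C0 * B0d * B1 - C1)) (1 - B0d * B0),
        hT, ← Matrix.mul_assoc]
    have hg2' : (1 - A2 * A2d) * T * (1 - B3d * B3) = 0 := by
      rw [← hB4T]; exact g2
    have hS : (1 - A2 * A2d) * T * (B3d * B3) = (1 - A2 * A2d) * T := by
      rw [Matrix.mul_sub, Matrix.mul_one, sub_eq_zero] at hg2'
      exact hg2'.symm
    have hPS : (1 - A0 * A0d) * ((1 - A2 * A2d) * T) = (1 - A2 * A2d) * T := by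
      simp only [Matrix.sub_mul, Matrix.one_mul, Matrix.mul_sub, Matrix.mul_assoc,
        hPT, assoc2 hPA2]
    obtain ⟨W, hW⟩ : ∃ W : QM k m, W = -(A2d * T) := ⟨_, rfl⟩
    obtain ⟨V, hV⟩ : ∃ V : QM n l, V = (1 - A2 * A2d) * T * B3d := ⟨_, rfl⟩
    obtain ⟨X0, hX0⟩ : ∃ X0 : QM k m, X0 = A0d * C0 + (1 - A0d * A0) * W := ⟨_, rfl⟩
    obtain ⟨Y0, hY0⟩ : ∃ Y0 : QM n l,
        Y0 = -((1 - A0 * A0d) * C0 * B0d) + V * (1 - B0 * B0d) := ⟨_, rfl⟩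
    -- first equation
    have u1 : A0 * X0 = A0 * A0d * C0 := by
      rw [hX0, Matrix.mul_add, ← Matrix.mul_assoc A0 (1 - A0d * A0) W, hA0LA,
        Matrix.zero_mul, add_zero, ← Matrix.mul_assoc]
    have hPC0 : (1 - A0 * A0d) * C0 * (B0d * B0) = (1 - A0 * A0d) * C0 := by
      rw [Matrix.mul_sub, Matrix.mul_one, sub_eq_zero] at hC0Q
      exact hC0Q.symm
    have u2 : Y0 * B0 = -((1 - A0 * A0d) * C0) := by
      rw [hY0, Matrix.add_mul, Matrix.neg_mul,
        Matrix.mul_assoc V (1 - B0 * B0d) B0, hRBB0, Matrix.mul_zero, add_zero,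
        Matrix.mul_assoc ((1 - A0 * A0d) * C0) B0d B0, hPC0]
    have c1 : A0 * X0 - Y0 * B0 = C0 := by
      rw [u1, u2, sub_neg_eq_add, Matrix.sub_mul, Matrix.one_mul]
      abel
    -- second equation setup
    obtain ⟨D, hD⟩ : ∃ D : QM n m, D = C1 - A1 * X0 + Y0 * B1 := ⟨_, rfl⟩
    have hA1X0 : (1 - A0 * A0d) * (A1 * X0) * (1 - B0d * B0)
        = (1 - A0 * A0d) * (A1 * (A0d * C0)) * (1 - B0d * B0) - A2 * (A2d * T) := by
      rw [hX0, Matrix.mul_add A1, Matrix.mul_add (1 - A0 * A0d), Matrix.add_mul,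
        ← Matrix.mul_assoc A1 (1 - A0d * A0) W,
        ← Matrix.mul_assoc (1 - A0 * A0d) (A1 * (1 - A0d * A0)) W, hPA1LA, hW,
        Matrix.mul_neg, Matrix.neg_mul, Matrix.mul_assoc A2 (A2d * T) (1 - B0d * B0),
        Matrix.mul_assoc A2d T (1 - B0d * B0), hTQ, ← sub_eq_add_neg]
    have v1 : V * B3 = (1 - A2 * A2d) * T := by
      rw [hV, Matrix.mul_assoc ((1 - A2 * A2d) * T) B3d B3, hS]
    have v2 : (1 - A0 * A0d) * (V * B3) = (1 - A2 * A2d) * T := by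
      rw [v1]; exact hPS
    have v3 : Y0 * B1 = -((1 - A0 * A0d) * (C0 * (B0d * B1))) + V * ((1 - B0 * B0d) * B1) := by
      rw [hY0, Matrix.add_mul, Matrix.neg_mul,
        Matrix.mul_assoc ((1 - A0 * A0d) * C0) B0d B1,
        Matrix.mul_assoc (1 - A0 * A0d) C0 (B0d * B1),
        Matrix.mul_assoc V (1 - B0 * B0d) B1]
    have hY0B1 : (1 - A0 * A0d) * (Y0 * B1) * (1 - B0d * B0)
        = -((1 - A0 * A0d) * (C0 * (B0d * B1)) * (1 - B0d * B0)) + (1 - A2 * A2d) * T := by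
      rw [v3, Matrix.mul_add (1 - A0 * A0d), Matrix.add_mul, Matrix.mul_neg,
        ← Matrix.mul_assoc (1 - A0 * A0d) (1 - A0 * A0d) (C0 * (B0d * B1)), hPP,
        Matrix.neg_mul,
        Matrix.mul_assoc (1 - A0 * A0d) (V * ((1 - B0 * B0d) * B1)) (1 - B0d * B0),
        Matrix.mul_assoc V ((1 - B0 * B0d) * B1) (1 - B0d * B0), ← hB2, ← hB3, v2]
    have hTexp : T = (1 - A0 * A0d) * (A1 * (A0d * C0)) * (1 - B0d * B0)
        + (1 - A0 * A0d) * (C0 * (B0d * B1)) * (1 - B0d * B0)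
        - (1 - A0 * A0d) * C1 * (1 - B0d * B0) := by
      rw [hT]
      simp only [Matrix.mul_add, Matrix.add_mul, Matrix.mul_sub, Matrix.sub_mul,
        Matrix.mul_one, Matrix.one_mul, Matrix.mul_assoc]
      abel
    have c2 : (1 - A0 * A0d) * D * (1 - B0d * B0) = 0 := by
      rw [hD, Matrix.mul_add (1 - A0 * A0d) (C1 - A1 * X0) (Y0 * B1),
        Matrix.mul_sub (1 - A0 * A0d) C1 (A1 * X0), Matrix.add_mul, Matrix.sub_mul,
        hA1X0, hY0B1, Matrix.sub_mul 1 (A2 * A2d) T, Matrix.one_mul,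
        Matrix.mul_assoc A2 A2d T, hTexp]
      abel
    obtain ⟨X1, Y1, hXY1⟩ := (bk A0 A0d hA0d B0 B0d hB0d D).mpr c2
    refine ⟨X0, X1, Y0, Y1, c1, ?_⟩
    have rearr : A0 * X1 + A1 * X0 - (Y0 * B1 + Y1 * B0)
        = (A0 * X1 - Y1 * B0) + A1 * X0 - Y0 * B1 := by abel
    rw [rearr, hXY1, hD]
    abel

/-- solvability of the dual quaternion matrix equation
`A X - Y B = C` in terms of `C3 L_{B0} = 0` and `B4 L_{B3} = 0`. -/
theorem stmt1 {n k l m : ℕ}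
    (A0 A1 : QM n k) (B0 B1 : QM l m) (C0 C1 : QM n m)
    (A0d : QM k n) (hA0d : IsMP A0 A0d)
    (B0d : QM m l) (hB0d : IsMP B0 B0d)
    (A11 : QM n k) (hA11 : A11 = A1 * (1 - A0d * A0))
    (A2 : QM n k) (hA2 : A2 = (1 - A0 * A0d) * A11)
    (A2d : QM k n) (hA2d : IsMP A2 A2d)
    (C3 : QM n m) (hC3 : C3 = -((1 - A0 * A0d) * C0))
    (B2 : QM l m) (hB2 : B2 = (1 - B0 * B0d) * B1)
    (A4 : QM n n) (hA4 : A4 = (1 - A2 * A2d) * (1 - A0 * A0d))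
    (C4 : QM n m) (hC4 : C4 = A4 * (A1 * A0d * C0 + C0 * B0d * B1 - C1))
    (B3 : QM l m) (hB3 : B3 = B2 * (1 - B0d * B0))
    (B3d : QM m l) (hB3d : IsMP B3 B3d)
    (B4 : QM n m) (hB4 : B4 = C4 * (1 - B0d * B0)) :
    (∃ (X : Matrix (Fin k) (Fin m) (DualNumber (Quaternion ℝ)))
       (Y : Matrix (Fin n) (Fin l) (DualNumber (Quaternion ℝ))),
        dm A0 A1 * X - Y * dm B0 B1 = dm C0 C1) ↔
      (C3 * (1 - B0d * B0) = 0 ∧ B4 * (1 - B3d * B3) = 0) := by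
  rw [bridge A0 A1 B0 B1 C0 C1]
  exact quat_iff A0 A1 B0 B1 C0 C1 A0d hA0d B0d hB0d A11 hA11 A2 hA2 A2d hA2d C3 hC3
    B2 hB2 A4 hA4 C4 hC4 B3 hB3 B3d hB3d B4 hB4
end

section
/- Let A0 be an n×k quaternion matrix, B0 an l×m quaternion matrix, and C0 an n×m quaternion matrix, and set C3 = −R_{A0}·C0. Then C3·L_{B0} = 0 if and only if r[B0 0; −C0 A0] = r(B0) + r(A0), where [B0 0; −C0 A0] is the (l+n)×(m+k) block matrix with blocks B0, 0, −C0, A0. -/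
open Matrix

section Aux

open Submodule Set Function

local notation "H" => Quaternion ℝ

/-- Right multiplication by a matrix, as a left-linear map on row vectors. -/
noncomputable def rmulL {p q : Type*} [Fintype p] (Y : Matrix p q H) :
    (p → H) →ₗ[H] (q → H) where
  toFun v := fun j => ∑ i, v i * Y i j
  map_add' u v := by funext j; simp [add_mul, Finset.sum_add_distrib]
  map_smul' c v := by funext j; simp [Finset.mul_sum, mul_assoc]

lemma rmulL_row {r p q : Type*} [Fintype p] (X : Matrix r p H) (Y : Matrix p q H) (i : r) :
    rmulL Y (X i) = (X * Y) i := by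
  funext j; simp [rmulL, Matrix.mul_apply]

lemma row_eq_sum {r p q : Type*} [Fintype p] (X : Matrix r p H) (Y : Matrix p q H) (i : r) :
    (X * Y) i = ∑ t, X i t • Y t := by
  funext j; simp [Matrix.mul_apply, Finset.sum_apply]

lemma qrank_def {p q : Type*} (A : Matrix p q H) :
    qrank A = Module.finrank H (span H (range A)) := rfl

lemma row_mem_span {r p q : Type*} [Fintype p] (X : Matrix r p H) (Y : Matrix p q H) (i : r) :
    (X * Y) i ∈ span H (range Y) := by
  rw [row_eq_sum]
  exact Submodule.sum_smul_mem _ _ fun t _ => subset_span (mem_range_self t)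

lemma qrank_mul_le_right {r p q : Type*} [Fintype p] [Fintype q]
    (X : Matrix r p H) (Y : Matrix p q H) : qrank (X * Y) ≤ qrank Y := by
  rw [qrank_def, qrank_def]
  apply Submodule.finrank_mono
  rw [span_le]
  rintro _ ⟨i, rfl⟩
  exact row_mem_span X Y i

lemma qrank_mul_le_left {r p q : Type*} [Fintype p] [Fintype q] [Fintype r]
    (X : Matrix r p H) (Y : Matrix p q H) : qrank (X * Y) ≤ qrank X := by
  rw [qrank_def, qrank_def]
  have h : span H (range (X * Y)) ≤ (span H (range X)).map (rmulL Y) := by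
    rw [span_le]
    rintro _ ⟨i, rfl⟩
    exact ⟨X i, subset_span (mem_range_self i), rmulL_row X Y i⟩
  exact le_trans (Submodule.finrank_mono h) (Submodule.finrank_map_le _ _)

lemma qrank_mul_left_cancel {r p q : Type*} [Fintype p] [Fintype q] [Fintype r] [DecidableEq p] [DecidableEq r]
    (P : Matrix r p H) (P' : Matrix p r H) (h : P' * P = 1)
    (A : Matrix p q H) : qrank (P * A) = qrank A := by
  refine le_antisymm (qrank_mul_le_right P A) ?_
  have : A = P' * (P * A) := by rw [← Matrix.mul_assoc, h, Matrix.one_mul]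
  calc qrank A = qrank (P' * (P * A)) := by rw [← this]
    _ ≤ qrank (P * A) := qrank_mul_le_right _ _

lemma qrank_mul_right_cancel {r p q : Type*} [Fintype p] [Fintype q] [Fintype r] [DecidableEq q] [DecidableEq r]
    (A : Matrix p q H) (Q : Matrix q r H) (Q' : Matrix r q H) (h : Q * Q' = 1) :
    qrank (A * Q) = qrank A := by
  refine le_antisymm (qrank_mul_le_left A Q) ?_
  have : A = (A * Q) * Q' := by rw [Matrix.mul_assoc, h, Matrix.mul_one]
  calc qrank A = qrank ((A * Q) * Q') := by rw [← this]
    _ ≤ qrank (A * Q) := qrank_mul_le_left _ _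

/-- Extension of a row vector by zero, on the left summand. -/
noncomputable def inlL (m k : Type*) : (m → H) →ₗ[H] (m ⊕ k → H) where
  toFun x := Sum.elim x 0
  map_add' x y := by funext s; cases s <;> simp
  map_smul' c x := by funext s; cases s <;> simp

/-- Extension of a row vector by zero, on the right summand. -/
noncomputable def inrL (m k : Type*) : (k → H) →ₗ[H] (m ⊕ k → H) where
  toFun x := Sum.elim (0 : m → H) x
  map_add' x y := by funext s; cases s <;> simp
  map_smul' c x := by funext s; cases s <;> simp

lemma inlL_inj {m k : Type*} : Injective (inlL m k) := by
  intro x y h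
  funext j
  exact congrFun h (Sum.inl j)

lemma inrL_inj {m k : Type*} : Injective (inrL m k) := by
  intro x y h
  funext j
  exact congrFun h (Sum.inr j)

lemma map_inl_inf_map_inr {m k : Type*} (P : Submodule H (m → H)) (Q : Submodule H (k → H)) :
    P.map (inlL m k) ⊓ Q.map (inrL m k) = ⊥ := by
  rw [Submodule.eq_bot_iff]
  rintro v ⟨⟨x, _, hx⟩, ⟨y, _, hy⟩⟩
  funext s
  cases s with
  | inl j => rw [← hy]; rfl
  | inr j => rw [← hx]; rfl

lemma finrank_map_inlL {m k : Type*} (P : Submodule H (m → H)) :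
    Module.finrank H (P.map (inlL m k)) = Module.finrank H P :=
  (LinearEquiv.finrank_eq (Submodule.equivMapOfInjective _ inlL_inj P)).symm

lemma finrank_map_inrL {m k : Type*} (Q : Submodule H (k → H)) :
    Module.finrank H (Q.map (inrL m k)) = Module.finrank H Q :=
  (LinearEquiv.finrank_eq (Submodule.equivMapOfInjective _ inrL_inj Q)).symm

lemma sum_smul_elim {r n m k : Type*} [Fintype n]
    (C : Matrix r n H) (U : Matrix n m H) (V : Matrix n k H) (i : r) :
    ∑ t, C i t • (Sum.elim (U t) (V t) : m ⊕ k → H) = Sum.elim ((C * U) i) ((C * V) i) := by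
  funext s
  cases s <;> simp [Finset.sum_apply, Matrix.mul_apply]

lemma fromBlocks_row_inl {l n m k : Type*} (B : Matrix l m H) (Z : Matrix l k H)
    (D : Matrix n m H) (A : Matrix n k H) (i : l) :
    (fromBlocks B Z D A) (Sum.inl i) = Sum.elim (B i) (Z i) := by
  funext s; cases s <;> simp [fromBlocks]

lemma fromBlocks_row_inr {l n m k : Type*} (B : Matrix l m H) (Z : Matrix l k H)
    (D : Matrix n m H) (A : Matrix n k H) (j : n) :
    (fromBlocks B Z D A) (Sum.inr j) = Sum.elim (D j) (A j) := by
  funext s; cases s <;> simp [fromBlocks]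

/-- The key rank formula for a block triangular matrix with MP-style conditions. -/
lemma qrank_blocks {l n m k : Type*} [Fintype l] [Fintype n] [Fintype m] [Fintype k] [DecidableEq n]
    (B : Matrix l m H) (A : Matrix n k H) (D : Matrix n m H)
    (Bd : Matrix m l H) (Ad : Matrix k n H)
    (hB : B * (Bd * B) = B) (hA : A * Ad * A = A)
    (h1 : A * Ad * D = 0) (h2 : D * (Bd * B) = 0) :
    qrank (fromBlocks B 0 D A) = qrank B + qrank A + qrank D := by
  classical
  set N := fromBlocks B 0 D A with hN
  set SB := span H (range B) with hSB
  set SD := span H (range D) with hSD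
  set SA := span H (range A) with hSA
  set W1 := (SB ⊔ SD).map (inlL m k) with hW1
  set W2 := SA.map (inrL m k) with hW2
  have hRD : (1 - A * Ad) * D = D := by
    rw [Matrix.sub_mul, Matrix.one_mul, h1, sub_zero]
  have hRA : (1 - A * Ad) * A = 0 := by
    rw [Matrix.sub_mul, Matrix.one_mul, hA, sub_self]
  have hAAdA : A * Ad * A = A := hA
  have helim_inl : ∀ x : m → H, (inlL m k) x = Sum.elim x (0 : k → H) := fun _ => rfl
  have helim_inr : ∀ x : k → H, (inrL m k) x = Sum.elim (0 : m → H) x := fun _ => rfl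
  -- the span of the rows of N
  have hspan : span H (range N) = W1 ⊔ W2 := by
    apply le_antisymm
    · rw [span_le]
      rintro _ ⟨s, rfl⟩
      cases s with
      | inl i =>
        have : N (Sum.inl i) = (inlL m k) (B i) := by
          rw [hN, fromBlocks_row_inl, helim_inl]; rfl
        rw [this]
        exact Submodule.mem_sup_left
          (Submodule.mem_map_of_mem (Submodule.mem_sup_left (subset_span (mem_range_self i))))
      | inr j =>
        have : N (Sum.inr j) = (inlL m k) (D j) + (inrL m k) (A j) := by
          rw [hN, fromBlocks_row_inr, helim_inl, helim_inr]
          funext s; cases s <;> simp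
        rw [this]
        exact add_mem
          (Submodule.mem_sup_left
            (Submodule.mem_map_of_mem (Submodule.mem_sup_right (subset_span (mem_range_self j)))))
          (Submodule.mem_sup_right (Submodule.mem_map_of_mem (subset_span (mem_range_self j))))
    · apply sup_le
      · rw [hW1, Submodule.map_sup]
        apply sup_le
        · rw [hSB, Submodule.map_span, span_le]
          rintro _ ⟨_, ⟨i, rfl⟩, rfl⟩
          have : (inlL m k) (B i) = N (Sum.inl i) := by
            rw [hN, fromBlocks_row_inl, helim_inl]; rfl
          rw [this]
          exact subset_span (mem_range_self _)
        · rw [hSD, Submodule.map_span, span_le]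
          rintro _ ⟨_, ⟨j, rfl⟩, rfl⟩
          have : (inlL m k) (D j) = ∑ t, ((1 - A * Ad : Matrix n n H)) j t • N (Sum.inr t) := by
            have h3 : ∀ t, N (Sum.inr t) = Sum.elim (D t) (A t) := fun t => by
              rw [hN, fromBlocks_row_inr]
            simp only [h3]
            rw [sum_smul_elim ((1 - A * Ad : Matrix n n H)) D A j, hRD, hRA, helim_inl]
            rfl
          rw [this]
          exact Submodule.sum_smul_mem _ _ fun t _ => subset_span (mem_range_self _)
      · rw [hW2, hSA, Submodule.map_span, span_le]
        rintro _ ⟨_, ⟨j, rfl⟩, rfl⟩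
        have : (inrL m k) (A j) = ∑ t, (A * Ad) j t • N (Sum.inr t) := by
          have h3 : ∀ t, N (Sum.inr t) = Sum.elim (D t) (A t) := fun t => by
            rw [hN, fromBlocks_row_inr]
          simp only [h3]
          rw [sum_smul_elim (A * Ad) D A j, h1, hAAdA, helim_inr]
          rfl
        rw [this]
        exact Submodule.sum_smul_mem _ _ fun t _ => subset_span (mem_range_self _)
  -- disjointness of the two pieces
  have hdisj12 : W1 ⊓ W2 = ⊥ := map_inl_inf_map_inr _ _
  -- disjointness of SB and SD
  have hdisjBD : SB ⊓ SD = ⊥ := by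
    rw [Submodule.eq_bot_iff]
    intro x hx
    have hfix : ∀ y ∈ SB, rmulL (Bd * B) y = y := by
      intro y hy
      have : SB ≤ LinearMap.ker (rmulL (Bd * B) - LinearMap.id) := by
        rw [hSB, span_le]
        rintro _ ⟨i, rfl⟩
        simp only [SetLike.mem_coe, LinearMap.mem_ker, LinearMap.sub_apply, LinearMap.id_apply]
        rw [rmulL_row B (Bd * B) i, hB, sub_self]
      have := this hy
      simp only [LinearMap.mem_ker, LinearMap.sub_apply, LinearMap.id_apply, sub_eq_zero] at this
      exact this
    have hkill : ∀ y ∈ SD, rmulL (Bd * B) y = 0 := by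
      intro y hy
      have : SD ≤ LinearMap.ker (rmulL (Bd * B)) := by
        rw [hSD, span_le]
        rintro _ ⟨j, rfl⟩
        simp only [SetLike.mem_coe, LinearMap.mem_ker]
        rw [rmulL_row D (Bd * B) j, h2]
        rfl
      exact this hy
    rw [← hfix x hx.1, hkill x hx.2]
  -- assemble finranks
  rw [qrank_def, hspan]
  have e1 : Module.finrank H ↥(W1 ⊔ W2) = Module.finrank H W1 + Module.finrank H W2 := by
    have := Submodule.finrank_sup_add_finrank_inf_eq W1 W2
    rw [hdisj12] at this
    simpa using this
  have e2 : Module.finrank H W1 = qrank B + qrank D := by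
    rw [hW1, finrank_map_inlL]
    have := Submodule.finrank_sup_add_finrank_inf_eq SB SD
    rw [hdisjBD] at this
    simp only [finrank_bot, add_zero] at this
    rw [this, qrank_def, qrank_def]
  have e3 : Module.finrank H W2 = qrank A := by
    rw [hW2, finrank_map_inrL, qrank_def]
  rw [e1, e2, e3]
  omega

lemma qrank_zero_iff {p q : Type*} [Fintype q] (A : Matrix p q H) :
    qrank A = 0 ↔ A = 0 := by
  rw [qrank_def]
  constructor
  · intro h
    rw [Submodule.finrank_eq_zero] at h
    funext i j
    have : A i ∈ span H (range A) := subset_span (mem_range_self i)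
    rw [h, Submodule.mem_bot] at this
    rw [show A i j = (A i) j from rfl, this]
    rfl
  · intro h
    subst h
    have hb : span H (range (0 : Matrix p q H)) = ⊥ := by
      refine le_antisymm ?_ bot_le
      rw [span_le]
      rintro _ ⟨i, rfl⟩
      exact (Submodule.mem_bot H).mpr rfl
    rw [hb, finrank_bot]

end Aux

/-- `C3 L_{B0} = 0` iff
`r [B0 0; -C0 A0] = r B0 + r A0`. -/
theorem stmt3 {n k l m : ℕ}
    (A0 : QM n k) (B0 : QM l m) (C0 : QM n m)
    (A0d : QM k n) (hA0d : IsMP A0 A0d)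
    (B0d : QM m l) (hB0d : IsMP B0 B0d)
    (C3 : QM n m) (hC3 : C3 = -((1 - A0 * A0d) * C0)) :
    C3 * (1 - B0d * B0) = 0 ↔
      qrank (fromBlocks B0 0 (-C0) A0) = qrank B0 + qrank A0 := by
  classical
  obtain ⟨hA, -, -, -⟩ := hA0d
  obtain ⟨hB, -, -, -⟩ := hB0d
  set D : QM n m := C3 * (1 - B0d * B0) with hD
  -- invertible transformations
  set X : QM n l := C0 * B0d with hX
  set Y : QM k m := A0d * (C0 * (1 - B0d * B0)) with hY
  have hP : (fromBlocks 1 0 (-X) 1 : Matrix (Fin l ⊕ Fin n) (Fin l ⊕ Fin n) (Quaternion ℝ)) *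
      fromBlocks 1 0 X 1 = 1 := by
    rw [fromBlocks_multiply]
    simp [← fromBlocks_one]
  have hQ : (fromBlocks 1 0 Y 1 : Matrix (Fin m ⊕ Fin k) (Fin m ⊕ Fin k) (Quaternion ℝ)) *
      fromBlocks 1 0 (-Y) 1 = 1 := by
    rw [fromBlocks_multiply]
    simp [← fromBlocks_one]
  have hPMQ : (fromBlocks 1 0 X 1 : Matrix (Fin l ⊕ Fin n) (Fin l ⊕ Fin n) (Quaternion ℝ)) * (fromBlocks B0 0 (-C0) A0) * (fromBlocks 1 0 Y 1 : Matrix (Fin m ⊕ Fin k) (Fin m ⊕ Fin k) (Quaternion ℝ)) =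
      fromBlocks B0 0 D A0 := by
    rw [fromBlocks_multiply, fromBlocks_multiply]
    refine Matrix.fromBlocks_inj.mpr ⟨by simp, by simp, ?_, by simp⟩
    simp only [hD, hC3, hX, hY, Matrix.mul_sub, Matrix.sub_mul, Matrix.mul_add,
      Matrix.add_mul, Matrix.neg_mul, Matrix.mul_neg, Matrix.mul_one, Matrix.one_mul,
      Matrix.zero_mul, Matrix.mul_zero, Matrix.mul_assoc, zero_add, add_zero, neg_sub, neg_neg]
    abel
  have hcore : qrank (fromBlocks B0 0 (-C0) A0) = qrank B0 + qrank A0 + qrank D := by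
    have h1 : qrank (fromBlocks B0 0 (-C0) A0) = qrank (fromBlocks B0 0 D A0) := by
      rw [← hPMQ]
      rw [qrank_mul_right_cancel _ _ _ hQ]
      rw [qrank_mul_left_cancel _ _ hP]
    rw [h1]
    have hB' : B0 * (B0d * B0) = B0 := by rw [← Matrix.mul_assoc, hB]
    have hAAd : A0 * A0d * (A0 * A0d) = A0 * A0d := by
      rw [← Matrix.mul_assoc, hA]
    have hR : A0 * A0d * ((1 - A0 * A0d) * C0) = 0 := by
      rw [← Matrix.mul_assoc, Matrix.mul_sub, Matrix.mul_one, hAAd, sub_self, Matrix.zero_mul]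
    have hBdB : B0d * B0 * (B0d * B0) = B0d * B0 := by
      rw [Matrix.mul_assoc, hB']
    have hLL : (1 - B0d * B0) * (B0d * B0) = 0 := by
      rw [Matrix.sub_mul, Matrix.one_mul, hBdB, sub_self]
    apply qrank_blocks B0 A0 D B0d A0d hB' hA
    · rw [hD, hC3, Matrix.neg_mul, Matrix.mul_neg, ← Matrix.mul_assoc, hR, Matrix.zero_mul,
        neg_zero]
    · rw [hD, Matrix.mul_assoc, hLL, Matrix.mul_zero]
  rw [hcore]
  constructor
  · intro h
    have := (qrank_zero_iff D).mpr h
    omega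
  · intro h
    have : qrank D = 0 := by omega
    exact (qrank_zero_iff D).mp this
end

section
/- Let A = A0 + A1ε ∈ DQ^{n×k}, B = B0 + B1ε ∈ DQ^{l×m}, C = C0 + C1ε ∈ DQ^{n×m}. Set A11 = A1·L_{A0}, A2 = R_{A0}·A11, A3 = R_{A0}, C3 = −R_{A0}·C0, B2 = R_{B0}·B1, A4 = R_{A2}·R_{A0}, A5 = −A4·A1·A0†, C4 = A4·(A1·A0†·C0 + C0·B0†·B1 − C1), A6 = R_{A4}·A5, C5 = R_{A4}·C4, B3 = B2·L_{B0}, B4 = C4·L_{B0}. Assume C3·L_{B0} = 0 and B4·L_{B3} = 0. Then for all quaternion matrices W1, ..., W8 of appropriate sizes, the matrices X = X0 + X1ε and Y = Y0 + Y1ε defined by U1 = A6†·C5·B0† + L_{A6}·W5 + W6·R_{B0}, U2 = A4†·B4·B3† + L_{A4}·W7 + W8·R_{B3}, Y0 = A3†·C3·B0† + L_{A3}·U1 + U2·R_{B0}, Y1 = A4†·(C4 − A5·U1·B0 − A4·U2·B2)·B0† + L_{A4}·W3 + W4·R_{B0}, W = A2†·A3·[C1 + Y0·B1 + Y1·B0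 − A1·A0†·(C0 + Y0·B0)] + L_{A2}·W2, X0 = A0†·(C0 + Y0·B0) + L_{A0}·W, X1 = A0†·[C1 + Y0·B1 + Y1·B0 − A1·A0†·(C0 + Y0·B0) − A11·W] + L_{A0}·W1, satisfy the dual quaternion matrix equation AX − YB = C. -/
open Matrix

lemma mp_unique {p q : ℕ} {A : QM p q} {B C : QM q p}
    (hB : IsMP A B) (hC : IsMP A C) : B = C := by
  obtain ⟨hB1, hB2, hB3, hB4⟩ := hB
  obtain ⟨hC1, hC2, hC3, hC4⟩ := hC
  have hAB : A * B = A * C := by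
    calc A * B = (A * B)ᴴ := hB3.symm
    _ = (A * C * A * B)ᴴ := by rw [hC1]
    _ = (A * B)ᴴ * (A * C)ᴴ := by rw [← conjTranspose_mul]; simp only [Matrix.mul_assoc]
    _ = A * B * (A * C) := by rw [hB3, hC3]
    _ = A * C := by rw [← Matrix.mul_assoc, hB1]
  have hBA : B * A = C * A := by
    calc B * A = (B * A)ᴴ := hB4.symm
    _ = (B * (A * C * A))ᴴ := by rw [hC1]
    _ = (C * A)ᴴ * (B * A)ᴴ := by rw [← conjTranspose_mul]; simp only [Matrix.mul_assoc]
    _ = C * A * (B * A) := by rw [hB4, hC4]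
    _ = C * A := by rw [Matrix.mul_assoc, ← Matrix.mul_assoc A B A, hB1]
  calc B = B * A * B := hB2.symm
  _ = C * A * B := by rw [hBA]
  _ = C * (A * C) := by rw [Matrix.mul_assoc, hAB]
  _ = C := by rw [← Matrix.mul_assoc, hC2]

lemma mp_self {p : ℕ} {P : QM p p} (h1 : Pᴴ = P) (h2 : P * P = P) : IsMP P P :=
  ⟨by rw [h2, h2], by rw [h2, h2], by rw [h2, h1], by rw [h2, h1]⟩

lemma two_par {a b c : ℕ} {A : QM a b} {B : QM b c} {D : QM a c} (h : A * B = D)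
    {e : ℕ} (X : QM c e) : A * (B * X) = D * X := by
  rw [← Matrix.mul_assoc, h]

set_option maxHeartbeats 2000000 in
/-- under the solvability conditions, the displayed formulas
always produce a solution of `A X - Y B = C`. -/
theorem stmt5 {n k l m : ℕ}
    (A0 A1 : QM n k) (B0 B1 : QM l m) (C0 C1 : QM n m)
    (A0d : QM k n) (hA0d : IsMP A0 A0d)
    (B0d : QM m l) (hB0d : IsMP B0 B0d)
    (A11 : QM n k) (hA11 : A11 = A1 * (1 - A0d * A0))
    (A2 : QM n k) (hA2 : A2 = (1 - A0 * A0d) * A11)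
    (A2d : QM k n) (hA2d : IsMP A2 A2d)
    (A3 : QM n n) (hA3 : A3 = 1 - A0 * A0d)
    (A3d : QM n n) (hA3d : IsMP A3 A3d)
    (C3 : QM n m) (hC3 : C3 = -((1 - A0 * A0d) * C0))
    (B2 : QM l m) (hB2 : B2 = (1 - B0 * B0d) * B1)
    (A4 : QM n n) (hA4 : A4 = (1 - A2 * A2d) * (1 - A0 * A0d))
    (A4d : QM n n) (hA4d : IsMP A4 A4d)
    (A5 : QM n n) (hA5 : A5 = -(A4 * A1 * A0d))
    (C4 : QM n m) (hC4 : C4 = A4 * (A1 * A0d * C0 + C0 * B0d * B1 - C1))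
    (A6 : QM n n) (hA6 : A6 = (1 - A4 * A4d) * A5)
    (A6d : QM n n) (hA6d : IsMP A6 A6d)
    (C5 : QM n m) (hC5 : C5 = (1 - A4 * A4d) * C4)
    (B3 : QM l m) (hB3 : B3 = B2 * (1 - B0d * B0))
    (B3d : QM m l) (hB3d : IsMP B3 B3d)
    (B4 : QM n m) (hB4 : B4 = C4 * (1 - B0d * B0))
    (hcond1 : C3 * (1 - B0d * B0) = 0)
    (hcond2 : B4 * (1 - B3d * B3) = 0)
    (W1 W2 : QM k m) (W3 W4 W5 W6 W7 W8 : QM n l)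
    (U1 : QM n l) (hU1 : U1 = A6d * C5 * B0d + (1 - A6d * A6) * W5 + W6 * (1 - B0 * B0d))
    (U2 : QM n l) (hU2 : U2 = A4d * B4 * B3d + (1 - A4d * A4) * W7 + W8 * (1 - B3 * B3d))
    (Y0 : QM n l) (hY0 : Y0 = A3d * C3 * B0d + (1 - A3d * A3) * U1 + U2 * (1 - B0 * B0d))
    (Y1 : QM n l) (hY1 : Y1 = A4d * (C4 - A5 * U1 * B0 - A4 * U2 * B2) * B0d
                          + (1 - A4d * A4) * W3 + W4 * (1 - B0 * B0d))
    (W : QM k m) (hW : W = A2d * A3 * (C1 + Y0 * B1 + Y1 * B0 - A1 * A0d * (C0 + Y0 * B0))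
                          + (1 - A2d * A2) * W2)
    (X0 : QM k m) (hX0 : X0 = A0d * (C0 + Y0 * B0) + (1 - A0d * A0) * W)
    (X1 : QM k m) (hX1 : X1 = A0d * (C1 + Y0 * B1 + Y1 * B0
                          - A1 * A0d * (C0 + Y0 * B0) - A11 * W) + (1 - A0d * A0) * W1) :
    dm A0 A1 * dm X0 X1 - dm Y0 Y1 * dm B0 B1 = dm C0 C1 := by
  clear hU1 hA6 hA6d hC5
  obtain ⟨a1, a2, a3, a4⟩ := hA0d
  obtain ⟨b1, b2, b3, b4⟩ := hB0d
  obtain ⟨c1, c2, c3, c4⟩ := hA2d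
  obtain ⟨d1, d2, d3, d4⟩ := hB3d
  -- basic zero facts
  have z1 : A0 * (1 - A0d * A0) = 0 := by
    rw [Matrix.mul_sub, Matrix.mul_one, ← Matrix.mul_assoc, a1, sub_self]
  have z2 : (1 - B0 * B0d) * B0 = 0 := by
    rw [Matrix.sub_mul, Matrix.one_mul, Matrix.mul_assoc, ← Matrix.mul_assoc, b1, sub_self]
  have z3 : (1 - B3 * B3d) * B3 = 0 := by
    rw [Matrix.sub_mul, Matrix.one_mul, Matrix.mul_assoc, ← Matrix.mul_assoc, d1, sub_self]
  have z5 : A2 * (1 - A2d * A2) = 0 := by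
    rw [Matrix.mul_sub, Matrix.mul_one, ← Matrix.mul_assoc, c1, sub_self]
  have eb0 : B0 * (B0d * B0) = B0 := by rw [← Matrix.mul_assoc, b1]
  -- A3 is a hermitian idempotent, so A3d = A3
  have hA3herm : A3ᴴ = A3 := by rw [hA3, conjTranspose_sub, conjTranspose_one, a3]
  have haa : A0 * A0d * (A0 * A0d) = A0 * A0d := by
    rw [← Matrix.mul_assoc, a1]
  have hA3sq : A3 * A3 = A3 := by
    rw [hA3]
    simp only [Matrix.sub_mul, Matrix.mul_sub, Matrix.one_mul, Matrix.mul_one]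
    rw [haa]; abel
  have hA3d' : A3d = A3 := mp_unique hA3d (mp_self hA3herm hA3sq)
  rw [hA3d'] at hY0
  -- A4 is a hermitian idempotent, so A4d = A4
  have hA2' : A2 = A3 * A11 := by rw [hA2, hA3]
  have hA3A2 : A3 * A2 = A2 := by rw [hA2', ← Matrix.mul_assoc, hA3sq]
  have hA3P : A3 * (A2 * A2d) = A2 * A2d := by rw [← Matrix.mul_assoc, hA3A2]
  have hP : A2 * A2d * A3 = A2 * A2d := by
    calc A2 * A2d * A3 = (A3ᴴ * (A2 * A2d)ᴴ)ᴴ := by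
          rw [← conjTranspose_mul, conjTranspose_conjTranspose]
    _ = (A3 * (A2 * A2d))ᴴ := by rw [hA3herm, c3]
    _ = (A2 * A2d)ᴴ := by rw [hA3P]
    _ = A2 * A2d := c3
  have hA4'' : A4 = A3 - A2 * A2d := by
    rw [hA4, ← hA3, Matrix.sub_mul, Matrix.one_mul, hP]
  have hPP : A2 * A2d * (A2 * A2d) = A2 * A2d := by rw [← Matrix.mul_assoc, c1]
  have hA4herm : A4ᴴ = A4 := by rw [hA4'', conjTranspose_sub, hA3herm, c3]
  have hA4sq : A4 * A4 = A4 := by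
    rw [hA4'']
    simp only [Matrix.sub_mul, Matrix.mul_sub]
    rw [hA3sq, hP, hA3P, hPP]; abel
  have hA4d' : A4d = A4 := mp_unique hA4d (mp_self hA4herm hA4sq)
  rw [hA4d'] at hU2 hY1
  -- abbreviations
  set Z : QM n m := C0 + Y0 * B0 with hZ
  set E : QM n m := C1 + Y0 * B1 + Y1 * B0 - A1 * A0d * Z with hE
  set K : QM n m := C4 - A5 * U1 * B0 - A4 * U2 * B2 with hK
  -- derived facts
  have hAA : A0 * A0d = 1 - A3 := by rw [hA3, sub_sub_cancel]
  have hA31 : A3 * (1 - A3) = 0 := by rw [Matrix.mul_sub, Matrix.mul_one, hA3sq, sub_self]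
  have hA3C3 : A3 * C3 = C3 := by
    rw [hC3, ← hA3, Matrix.mul_neg, ← Matrix.mul_assoc, hA3sq]
  have hA3C0 : A3 * C0 = -C3 := by rw [hC3, ← hA3, neg_neg]
  have hC3B : C3 * (B0d * B0) = C3 := by
    rw [Matrix.mul_sub, Matrix.mul_one, sub_eq_zero] at hcond1; exact hcond1.symm
  have n11 : B4 * (B3d * B3) = B4 := by
    rw [Matrix.mul_sub, Matrix.mul_one, sub_eq_zero] at hcond2; exact hcond2.symm
  have n1 : A4 * A3 = A4 := by
    calc A4 * A3 = (A3 - A2 * A2d) * A3 := by rw [← hA4'']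
    _ = A3 - A2 * A2d := by rw [Matrix.sub_mul, hA3sq, hP]
    _ = A4 := hA4''.symm
  have n2 : A4 * (1 - A3) = 0 := by rw [Matrix.mul_sub, Matrix.mul_one, n1, sub_self]
  have n2' : A4 * (1 - A4) = 0 := by rw [Matrix.mul_sub, Matrix.mul_one, hA4sq, sub_self]
  have n3 : A4 * A5 = A5 := by
    rw [hA5, Matrix.mul_neg]
    simp only [← Matrix.mul_assoc]
    rw [hA4sq]
  have n4 : A4 * C4 = C4 := by rw [hC4, ← Matrix.mul_assoc, hA4sq]
  have n5 : A0d * A3 = 0 := by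
    rw [hA3, Matrix.mul_sub, Matrix.mul_one, ← Matrix.mul_assoc, a2, sub_self]
  have n6 : A5 * C3 = 0 := by
    rw [hA5, hC3, ← hA3, Matrix.neg_mul, Matrix.mul_neg, neg_neg]
    simp only [Matrix.mul_assoc]
    rw [two_par n5, Matrix.zero_mul, Matrix.mul_zero, Matrix.mul_zero]
  have ea2 : A0d * (A0 * A0d) = A0d := by rw [← Matrix.mul_assoc, a2]
  have n7 : A5 * (1 - A3) = A5 := by
    rw [← hAA, hA5, Matrix.neg_mul]
    simp only [Matrix.mul_assoc]
    rw [ea2]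
  have n9 : A4 * C3 = -(A4 * C0) := by
    rw [hC3, ← hA3, Matrix.mul_neg, ← Matrix.mul_assoc, n1]
  have n10 : A4 * B4 = B4 := by rw [hB4, ← Matrix.mul_assoc, n4]
  have n13 : C4 * (B0d * B0) = C4 - B4 := by rw [hB4, Matrix.mul_sub, Matrix.mul_one]; abel
  have n14 : B2 * (B0d * B0) = B2 - B3 := by rw [hB3, Matrix.mul_sub, Matrix.mul_one]; abel
  have hA4A1A0d : ∀ {e : ℕ} (X : QM n e), A4 * (A1 * A0d * X) = -(A5 * X) := by
    intro e X
    rw [hA5, Matrix.neg_mul, neg_neg]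
    simp only [Matrix.mul_assoc]
  have n12 : C4 = A4 * (C0 * (B0d * B1)) - A5 * C0 - A4 * C1 := by
    rw [hC4, hA5]
    simp only [Matrix.neg_mul, sub_neg_eq_add, Matrix.mul_assoc, Matrix.mul_sub, Matrix.mul_add]
    abel
  -- simplified defining equations
  have hY0' : Y0 = C3 * B0d + (1 - A3) * U1 + U2 * (1 - B0 * B0d) := by
    rw [hY0, hA3sq, hA3C3]
  have hY1' : Y1 = A4 * K * B0d + (1 - A4) * W3 + W4 * (1 - B0 * B0d) := by
    rw [hY1, hA4sq]
  have hU2' : U2 = A4 * B4 * B3d + (1 - A4) * W7 + W8 * (1 - B3 * B3d) := by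
    rw [hU2, hA4sq]
  have hA4K : A4 * K = K := by
    rw [hK]
    simp only [Matrix.mul_sub, ← Matrix.mul_assoc]
    rw [n4, n3, hA4sq]
  -- step: A3 * (Y0 * B0) = C3
  have hA3Y0 : A3 * Y0 = C3 * B0d + A3 * (U2 * (1 - B0 * B0d)) := by
    rw [hY0']
    simp only [Matrix.mul_add]
    rw [two_par hA31, two_par hA3C3, Matrix.zero_mul, add_zero]
  have hA3YB : A3 * (Y0 * B0) = C3 := by
    rw [← Matrix.mul_assoc, hA3Y0, Matrix.add_mul]
    simp only [Matrix.mul_assoc]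
    rw [z2, Matrix.mul_zero, Matrix.mul_zero, add_zero, hC3B]
  -- first component equation
  have eq0 : A0 * X0 - Y0 * B0 = C0 := by
    rw [hX0, Matrix.mul_add, two_par z1, Matrix.zero_mul, add_zero, ← Matrix.mul_assoc, hAA,
      Matrix.sub_mul, Matrix.one_mul, hZ, Matrix.mul_add, hA3C0, hA3YB]
    abel
  -- pieces for the second component equation
  have cc1 : A4 * Y0 = A4 * (C3 * B0d) + A4 * (U2 * (1 - B0 * B0d)) := by
    rw [hY0']
    simp only [Matrix.mul_add]
    rw [two_par n2, Matrix.zero_mul, add_zero]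
  have cc2 : A5 * Y0 = A5 * U1 + A5 * (U2 * (1 - B0 * B0d)) := by
    rw [hY0']
    simp only [Matrix.mul_add]
    rw [two_par n6, two_par n7, Matrix.zero_mul, zero_add]
  have cc2' : A5 * (Y0 * B0) = A5 * (U1 * B0) := by
    rw [← Matrix.mul_assoc, cc2, Matrix.add_mul]
    simp only [Matrix.mul_assoc]
    rw [z2, Matrix.mul_zero, Matrix.mul_zero, add_zero]
  have cc1' : A4 * (Y0 * B1) = A4 * (C3 * (B0d * B1)) + A4 * (U2 * B2) := by
    rw [← Matrix.mul_assoc, cc1, Matrix.add_mul]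
    simp only [Matrix.mul_assoc]
    rw [← hB2]
  have cc3 : A4 * Y1 = A4 * K * B0d + A4 * (W4 * (1 - B0 * B0d)) := by
    rw [hY1']
    simp only [Matrix.mul_add]
    rw [two_par n2', Matrix.zero_mul, add_zero]
    rw [← Matrix.mul_assoc, ← Matrix.mul_assoc, hA4sq]
  have cc3' : A4 * (Y1 * B0) = K * (B0d * B0) := by
    rw [← Matrix.mul_assoc, cc3, Matrix.add_mul]
    simp only [Matrix.mul_assoc]
    rw [z2, Matrix.mul_zero, Matrix.mul_zero, add_zero, two_par hA4K]
  have cc4a : A4 * U2 = B4 * B3d + A4 * W8 * (1 - B3 * B3d) := by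
    rw [hU2']
    simp only [Matrix.mul_add, ← Matrix.mul_assoc]
    rw [hA4sq, n10, n2', Matrix.zero_mul, add_zero]
  have cc4 : A4 * (U2 * B3) = B4 := by
    rw [← Matrix.mul_assoc, cc4a, Matrix.add_mul]
    simp only [Matrix.mul_assoc]
    rw [z3, Matrix.mul_zero, Matrix.mul_zero, add_zero, n11]
  -- the crucial vanishing: A4 * E = 0
  have m5 : A4 * E = 0 := by
    rw [hE]
    rw [Matrix.mul_sub, Matrix.mul_add, Matrix.mul_add, cc1', cc3', hA4A1A0d, hZ, Matrix.mul_add, cc2']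
    rw [hK, Matrix.sub_mul, Matrix.sub_mul, n13]
    have t1 : A5 * U1 * B0 * (B0d * B0) = A5 * (U1 * B0) := by
      simp only [Matrix.mul_assoc]; rw [eb0]
    have t2 : A4 * U2 * B2 * (B0d * B0) = A4 * (U2 * B2) - B4 := by
      simp only [Matrix.mul_assoc]
      rw [n14, Matrix.mul_sub, Matrix.mul_sub, cc4]
    rw [t1, t2]
    have t3 : A4 * (C3 * (B0d * B1)) = -(A4 * (C0 * (B0d * B1))) := by
      rw [← Matrix.mul_assoc, n9, Matrix.neg_mul, Matrix.mul_assoc]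
    rw [t3, n12]
    abel
  -- second component equation
  have m3 : A3 * (A11 * W) = A2 * W := by rw [← Matrix.mul_assoc, ← hA2']
  have m4 : A2 * W = A2 * (A2d * (A3 * E)) := by
    rw [hW, Matrix.mul_add, two_par z5, Matrix.zero_mul, add_zero]
    simp only [Matrix.mul_assoc]
  have m8 : A2 * (A2d * (A3 * E)) = A3 * E := by
    have t1 : A2 * (A2d * (A3 * E)) = A2 * A2d * E := by
      rw [← Matrix.mul_assoc, ← Matrix.mul_assoc, hP]
    have t2 : A4 * E = A3 * E - A2 * A2d * E := by rw [hA4'', Matrix.sub_mul]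
    have t3 : A3 * E - A2 * A2d * E = 0 := by rw [← t2, m5]
    rw [t1]
    exact (sub_eq_zero.mp t3).symm
  have eq1 : A0 * X1 + A1 * X0 - (Y0 * B1 + Y1 * B0) = C1 := by
    have m1 : A0 * X1 = (E - A11 * W) - A3 * (E - A11 * W) := by
      rw [hX1, Matrix.mul_add, two_par z1, Matrix.zero_mul, add_zero, ← Matrix.mul_assoc, hAA,
        Matrix.sub_mul, Matrix.one_mul]
    have m2 : A1 * X0 = A1 * A0d * Z + A11 * W := by
      rw [hX0, Matrix.mul_add, ← Matrix.mul_assoc, ← Matrix.mul_assoc, ← hA11]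
    rw [m1, m2, Matrix.mul_sub, m3, m4, m8, hE]
    simp only [Matrix.mul_assoc]
    abel
  -- assemble
  rw [dm_mul, dm_mul, dm_sub, eq0, eq1]
end

section
/- Let A = A0 + A1ε ∈ DQ^{n×k}, B = B0 + B1ε ∈ DQ^{l×m}, C = C0 + C1ε ∈ DQ^{n×m}. Set A11 = A1·L_{A0}, A2 = R_{A0}·A11, A3 = R_{A0}, C3 = −R_{A0}·C0, B2 = R_{B0}·B1, A4 = R_{A2}·R_{A0}, A5 = −A4·A1·A0†, C4 = A4·(A1·A0†·C0 + C0·B0†·B1 − C1), A6 = R_{A4}·A5, C5 = R_{A4}·C4, B3 = B2·L_{B0}, B4 = C4·L_{B0}. Suppose X = X0 + X1ε ∈ DQ^{k×m} and Y = Y0 + Y1ε ∈ DQ^{n×l} satisfy AX − YB = C. Then there exist quaternion matrices W1, ..., W8 of appropriate sizes such that, with U1 = A6†·C5·B0† + L_{A6}·W5 + W6·R_{B0}, U2 = A4†·B4·B3† + L_{A4}·W7 + W8·R_{B3}, and W = A2†·A3·[C1 + Y0·B1 + Y1·B0 − A1·A0†·(C0 + Y0·B0)] + L_{A2}·W2,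 one has Y0 = A3†·C3·B0† + L_{A3}·U1 + U2·R_{B0}, Y1 = A4†·(C4 − A5·U1·B0 − A4·U2·B2)·B0† + L_{A4}·W3 + W4·R_{B0}, X0 = A0†·(C0 + Y0·B0) + L_{A0}·W, and X1 = A0†·[C1 + Y0·B1 + Y1·B0 − A1·A0†·(C0 + Y0·B0) − A11·W] + L_{A0}·W1. -/
open Matrix

private lemma rep1 {p q r : ℕ} (A : QM p q) (Ad : QM q p) (Z : QM q r) (D : QM p r)
    (h : A * Z = D) : Z = Ad * D + (1 - Ad * A) * Z := by
  rw [← h, Matrix.sub_mul, Matrix.one_mul, ← Matrix.mul_assoc]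
  abel

private lemma rep2 {p q r s : ℕ} (A : QM p q) (Ad : QM q p) (B : QM r s) (Bd : QM s r)
    (Z : QM q r) (C : QM p s) (h : A * Z * B = C) :
    Z = Ad * C * Bd + (1 - Ad * A) * Z + (Ad * A * Z) * (1 - B * Bd) := by
  rw [← h]
  simp only [Matrix.sub_mul, Matrix.mul_sub, Matrix.one_mul, Matrix.mul_one, Matrix.mul_assoc]
  abel

private lemma zl {p q r : ℕ} {A : QM p q} {Ad : QM q p} (h : A * Ad * A = A) (Z : QM q r) :
    (1 - A * Ad) * (A * Z) = 0 := by
  rw [Matrix.sub_mul, Matrix.one_mul, ← Matrix.mul_assoc, h, sub_self]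


private lemma extract0 {n k l m : ℕ} (A0 A1 : QM n k) (B0 B1 : QM l m) (C0 C1 : QM n m)
    (X0 X1 : QM k m) (Y0 Y1 : QM n l)
    (hsol : dm A0 A1 * dm X0 X1 - dm Y0 Y1 * dm B0 B1 = dm C0 C1) :
    A0 * X0 - Y0 * B0 = C0 := by
  refine Matrix.ext fun i j => ?_
  have h := congrFun (congrFun hsol i) j
  simp [dm, Matrix.mul_apply, Matrix.sub_apply, Matrix.add_apply] at h
  have := congrArg TrivSqZeroExt.fst h
  simpa [Matrix.mul_apply, TrivSqZeroExt.fst_sum] using this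

private lemma extract1 {n k l m : ℕ} (A0 A1 : QM n k) (B0 B1 : QM l m) (C0 C1 : QM n m)
    (X0 X1 : QM k m) (Y0 Y1 : QM n l)
    (hsol : dm A0 A1 * dm X0 X1 - dm Y0 Y1 * dm B0 B1 = dm C0 C1) :
    A0 * X1 + A1 * X0 - Y0 * B1 - Y1 * B0 = C1 := by
  refine Matrix.ext fun i j => ?_
  have h := congrFun (congrFun hsol i) j
  simp [dm, Matrix.mul_apply, Matrix.sub_apply, Matrix.add_apply] at h
  have := congrArg TrivSqZeroExt.snd h
  simp [Matrix.mul_apply, TrivSqZeroExt.snd_sum, TrivSqZeroExt.snd_mul] at this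
  simpa [Matrix.mul_apply, Matrix.add_apply, Matrix.sub_apply,
    Finset.sum_add_distrib, add_comm, sub_sub] using this

set_option maxHeartbeats 2000000 in
/-- every solution of `A X - Y B = C` is of the displayed form. -/
theorem stmt6 {n k l m : ℕ}
    (A0 A1 : QM n k) (B0 B1 : QM l m) (C0 C1 : QM n m)
    (A0d : QM k n) (hA0d : IsMP A0 A0d)
    (B0d : QM m l) (hB0d : IsMP B0 B0d)
    (A11 : QM n k) (hA11 : A11 = A1 * (1 - A0d * A0))
    (A2 : QM n k) (hA2 : A2 = (1 - A0 * A0d) * A11)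
    (A2d : QM k n) (hA2d : IsMP A2 A2d)
    (A3 : QM n n) (hA3 : A3 = 1 - A0 * A0d)
    (A3d : QM n n) (hA3d : IsMP A3 A3d)
    (C3 : QM n m) (hC3 : C3 = -((1 - A0 * A0d) * C0))
    (B2 : QM l m) (hB2 : B2 = (1 - B0 * B0d) * B1)
    (A4 : QM n n) (hA4 : A4 = (1 - A2 * A2d) * (1 - A0 * A0d))
    (A4d : QM n n) (hA4d : IsMP A4 A4d)
    (A5 : QM n n) (hA5 : A5 = -(A4 * A1 * A0d))
    (C4 : QM n m) (hC4 : C4 = A4 * (A1 * A0d * C0 + C0 * B0d * B1 - C1))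
    (A6 : QM n n) (hA6 : A6 = (1 - A4 * A4d) * A5)
    (A6d : QM n n) (hA6d : IsMP A6 A6d)
    (C5 : QM n m) (hC5 : C5 = (1 - A4 * A4d) * C4)
    (B3 : QM l m) (hB3 : B3 = B2 * (1 - B0d * B0))
    (B3d : QM m l) (hB3d : IsMP B3 B3d)
    (B4 : QM n m) (hB4 : B4 = C4 * (1 - B0d * B0))
    (X0 X1 : QM k m) (Y0 Y1 : QM n l)
    (hsol : dm A0 A1 * dm X0 X1 - dm Y0 Y1 * dm B0 B1 = dm C0 C1) :
    ∃ (W1 W2 : QM k m) (W3 W4 W5 W6 W7 W8 : QM n l)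
      (U1 U2 : QM n l) (W : QM k m),
      U1 = A6d * C5 * B0d + (1 - A6d * A6) * W5 + W6 * (1 - B0 * B0d) ∧
      U2 = A4d * B4 * B3d + (1 - A4d * A4) * W7 + W8 * (1 - B3 * B3d) ∧
      W = A2d * A3 * (C1 + Y0 * B1 + Y1 * B0 - A1 * A0d * (C0 + Y0 * B0))
            + (1 - A2d * A2) * W2 ∧
      Y0 = A3d * C3 * B0d + (1 - A3d * A3) * U1 + U2 * (1 - B0 * B0d) ∧
      Y1 = A4d * (C4 - A5 * U1 * B0 - A4 * U2 * B2) * B0d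
            + (1 - A4d * A4) * W3 + W4 * (1 - B0 * B0d) ∧
      X0 = A0d * (C0 + Y0 * B0) + (1 - A0d * A0) * W ∧
      X1 = A0d * (C1 + Y0 * B1 + Y1 * B0 - A1 * A0d * (C0 + Y0 * B0) - A11 * W)
            + (1 - A0d * A0) * W1 := by
  obtain ⟨mpA0, -, -, -⟩ := hA0d
  obtain ⟨mpB0, -, -, -⟩ := hB0d
  obtain ⟨mpA2, -, -, -⟩ := hA2d
  obtain ⟨mpA3, -, -, -⟩ := hA3d
  obtain ⟨mpA4, -, -, -⟩ := hA4d
  -- component equations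
  have e0 : A0 * X0 - Y0 * B0 = C0 := extract0 A0 A1 B0 B1 C0 C1 X0 X1 Y0 Y1 hsol
  have e1 : A0 * X1 + A1 * X0 - Y0 * B1 - Y1 * B0 = C1 :=
    extract1 A0 A1 B0 B1 C0 C1 X0 X1 Y0 Y1 hsol
  have k1 : A0 * X0 = C0 + Y0 * B0 := by rw [← e0]; abel
  have hY0B0 : Y0 * B0 = A0 * X0 - C0 := by rw [← e0]; abel
  have e1' : C1 + Y0 * B1 + Y1 * B0 = A0 * X1 + A1 * X0 := by rw [← e1]; abel
  have hRA0A0 : (1 - A0 * A0d) * A0 = 0 := by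
    rw [Matrix.sub_mul, Matrix.one_mul, mpA0, sub_self]
  have hA3A0 : A3 * A0 = 0 := by rw [hA3]; exact hRA0A0
  have hA4A0 : A4 * A0 = 0 := by rw [hA4, Matrix.mul_assoc, hRA0A0, Matrix.mul_zero]
  have hRA2A2 : (1 - A2 * A2d) * A2 = 0 := by
    rw [Matrix.sub_mul, Matrix.one_mul, mpA2, sub_self]
  have hA4A11 : A4 * A11 = 0 := by rw [hA4, Matrix.mul_assoc, ← hA2, hRA2A2]
  have hB0L : B0 * (1 - B0d * B0) = 0 := by
    rw [Matrix.mul_sub, Matrix.mul_one, ← Matrix.mul_assoc, mpB0, sub_self]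
  have h33 : A3 * (A3d * A3) = A3 := by rw [← Matrix.mul_assoc, mpA3]
  have hA4A3 : A4 * (A3d * A3) = A4 := by
    rw [hA4, ← hA3, Matrix.mul_assoc, h33]
  have hc0 : A0 * A0d * (A0 * X0) = A0 * X0 := by rw [← Matrix.mul_assoc, mpA0]
  have k2 : A3 * Y0 * B0 = C3 := by
    rw [hA3, hC3, Matrix.mul_assoc, hY0B0]
    simp only [Matrix.mul_sub, Matrix.sub_mul, Matrix.one_mul]
    rw [hc0]
    abel
  have k3 : A2 * X0 = A3 * (C1 + Y0 * B1 + Y1 * B0 - A1 * A0d * (C0 + Y0 * B0)) := by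
    rw [e1', hY0B0, hA2, hA11, ← hA3]
    simp only [Matrix.mul_sub, Matrix.sub_mul, Matrix.mul_add, Matrix.add_mul,
      Matrix.mul_one, Matrix.one_mul, Matrix.mul_assoc]
    rw [← Matrix.mul_assoc A3 A0 X1, hA3A0, Matrix.zero_mul]
    abel
  have k4 : A0 * X1 = C1 + Y0 * B1 + Y1 * B0 - A1 * A0d * (C0 + Y0 * B0) - A11 * X0 := by
    rw [e1', hY0B0, hA11]
    simp only [Matrix.mul_sub, Matrix.sub_mul, Matrix.mul_add, Matrix.add_mul,
      Matrix.mul_one, Matrix.one_mul, Matrix.mul_assoc]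
    abel
  have hA1X0 : A1 * X0 = A1 * (A0d * (C0 + Y0 * B0)) + A11 * X0 := by
    rw [hA11, ← k1]
    simp only [Matrix.mul_sub, Matrix.sub_mul, Matrix.mul_one, Matrix.one_mul,
      Matrix.mul_assoc]
    abel
  have hA4A1X0 : A4 * (A1 * X0) = A4 * (A1 * (A0d * (C0 + Y0 * B0))) := by
    rw [hA1X0, Matrix.mul_add, ← Matrix.mul_assoc A4 A11 X0, hA4A11, Matrix.zero_mul, add_zero]
  have hC4' : C4 = A4 * (Y1 * B0) + A4 * (Y0 * B1) + A4 * (C0 * (B0d * B1))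
      - A4 * (A1 * (A0d * (Y0 * B0))) := by
    rw [hC4, ← e1]
    simp only [Matrix.mul_sub, Matrix.mul_add, Matrix.add_mul, Matrix.sub_mul,
      Matrix.mul_assoc]
    rw [← Matrix.mul_assoc A4 A0 X1, hA4A0, Matrix.zero_mul, hA4A1X0]
    simp only [Matrix.mul_add, Matrix.mul_assoc]
    abel
  have hz4 : ∀ (Z : QM n m), (1 - A4 * A4d) * (A4 * Z) = 0 := fun Z => zl mpA4 Z
  have k5 : A6 * Y0 * B0 = C5 := by
    rw [hA6, hC5, hA5, hC4']
    simp only [Matrix.neg_mul, Matrix.mul_neg, Matrix.mul_add, Matrix.mul_sub,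
      Matrix.mul_assoc, hz4, neg_zero, add_zero, zero_add, sub_zero, zero_sub,
      neg_neg, sub_self]
  have hU2 : A4 * (A3d * A3 * Y0) = A4 * Y0 := by
    rw [← Matrix.mul_assoc, hA4A3]
  have hA4Y0B2 : A4 * Y0 * B2 = A4 * (Y0 * B1) + A4 * (C0 * (B0d * B1)) := by
    rw [hB2]
    simp only [Matrix.mul_sub, Matrix.sub_mul, Matrix.one_mul, Matrix.mul_assoc]
    rw [← Matrix.mul_assoc Y0 B0, hY0B0]
    simp only [Matrix.sub_mul, Matrix.mul_sub, Matrix.mul_assoc]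
    rw [← Matrix.mul_assoc A4 A0, hA4A0, Matrix.zero_mul]
    abel
  have k6 : A4 * Y1 * B0 = C4 - A5 * Y0 * B0 - A4 * (A3d * A3 * Y0) * B2 := by
    rw [hU2, hC4', hA5, hA4Y0B2]
    simp only [Matrix.neg_mul, Matrix.mul_assoc]
    abel
  have k7 : A4 * (A3d * A3 * Y0) * B3 = B4 := by
    rw [hU2, hB3, hB4, ← Matrix.mul_assoc (A4 * Y0) B2, hA4Y0B2, hC4']
    simp only [Matrix.add_mul, Matrix.sub_mul, Matrix.mul_assoc, hB0L,
      Matrix.mul_zero, sub_zero, zero_add, add_zero]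
  refine ⟨X1, X0, Y1, A4d * A4 * Y1, Y0, A6d * A6 * Y0, A3d * A3 * Y0,
    A4d * A4 * (A3d * A3 * Y0), Y0, A3d * A3 * Y0, X0,
    rep2 A6 A6d B0 B0d Y0 C5 k5,
    rep2 A4 A4d B3 B3d (A3d * A3 * Y0) B4 k7,
    ?_,
    rep2 A3 A3d B0 B0d Y0 C3 k2,
    rep2 A4 A4d B0 B0d Y1 _ k6,
    rep1 A0 A0d X0 _ k1,
    rep1 A0 A0d X1 _ k4⟩
  have h := rep1 A2 A2d X0 _ k3
  rw [← Matrix.mul_assoc] at h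
  exact h
end

section
/- Let A0 ∈ ℍ^{p×q}, A1 ∈ ℍ^{p×q₁}, B0 ∈ ℍ^{s×t}, B1 ∈ ℍ^{s₁×t}, C ∈ ℍ^{p×t} be quaternion matrices. Set A = R_{A0}·A1, A2 = R_{A0}·C, B2 = B0·L_{B1}, B3 = C·L_{B1}. Then there exist quaternion matrices X0 ∈ ℍ^{q×s}, X1 ∈ ℍ^{q×s₁}, X2 ∈ ℍ^{q₁×s₁} with A0·X0·B0 + A0·X1·B1 + A1·X2·B1 = C if and only if R_A·A2 = 0, R_{A0}·B3 = 0, and B3·L_{B2} = 0. -/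
open Matrix

/-- solvability of the quaternion matrix equation
`A0 X0 B0 + A0 X1 B1 + A1 X2 B1 = C`. -/
theorem stmt10 {p q q₁ s s₁ t : ℕ}
    (A0 : QM p q) (A1 : QM p q₁) (B0 : QM s t) (B1 : QM s₁ t) (C : QM p t)
    (A0d : QM q p) (hA0d : IsMP A0 A0d)
    (B1d : QM t s₁) (hB1d : IsMP B1 B1d)
    (A : QM p q₁) (hA : A = (1 - A0 * A0d) * A1)
    (Ad : QM q₁ p) (hAd : IsMP A Ad)
    (A2 : QM p t) (hA2 : A2 = (1 - A0 * A0d) * C)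
    (B2 : QM s t) (hB2 : B2 = B0 * (1 - B1d * B1))
    (B2d : QM t s) (hB2d : IsMP B2 B2d)
    (B3 : QM p t) (hB3 : B3 = C * (1 - B1d * B1)) :
    (∃ (X0 : QM q s) (X1 : QM q s₁) (X2 : QM q₁ s₁),
        A0 * X0 * B0 + A0 * X1 * B1 + A1 * X2 * B1 = C) ↔
      ((1 - A * Ad) * A2 = 0 ∧ (1 - A0 * A0d) * B3 = 0 ∧ B3 * (1 - B2d * B2) = 0) := by
  obtain ⟨hA01, -, -, -⟩ := hA0d
  obtain ⟨hB11, -, -, -⟩ := hB1d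
  obtain ⟨hAd1, -, -, -⟩ := hAd
  obtain ⟨hB21, -, -, -⟩ := hB2d
  have hRA0A0 : (1 - A0 * A0d) * A0 = 0 := by
    rw [Matrix.sub_mul, Matrix.one_mul, hA01, sub_self]
  have hB1L : B1 * (1 - B1d * B1) = 0 := by
    rw [Matrix.mul_sub, Matrix.mul_one, ← Matrix.mul_assoc, hB11, sub_self]
  have hRAA : (1 - A * Ad) * A = 0 := by
    rw [Matrix.sub_mul, Matrix.one_mul, hAd1, sub_self]
  have hB2L : B2 * (1 - B2d * B2) = 0 := by
    rw [Matrix.mul_sub, Matrix.mul_one, ← Matrix.mul_assoc, hB21, sub_self]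
  constructor
  · rintro ⟨X0, X1, X2, h⟩
    have hz : ∀ (Y : QM q t), (1 - A0 * A0d) * (A0 * Y) = 0 := by
      intro Y; rw [← Matrix.mul_assoc, hRA0A0, Matrix.zero_mul]
    have hA2' : A2 = A * (X2 * B1) := by
      rw [hA2, ← h, Matrix.mul_add, Matrix.mul_add, hA,
        Matrix.mul_assoc A0 X0 B0, Matrix.mul_assoc A0 X1 B1, hz, hz,
        Matrix.mul_assoc A1 X2 B1, ← Matrix.mul_assoc]
      simp
    have hB3' : B3 = A0 * X0 * B2 := by
      rw [hB3, ← h, Matrix.add_mul, Matrix.add_mul, hB2,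
        Matrix.mul_assoc (A0 * X1) B1, hB1L, Matrix.mul_zero,
        Matrix.mul_assoc (A1 * X2) B1, hB1L, Matrix.mul_zero,
        Matrix.mul_assoc (A0 * X0) B0]
      simp
    refine ⟨?_, ?_, ?_⟩
    · rw [hA2', ← Matrix.mul_assoc, hRAA, Matrix.zero_mul]
    · rw [hB3', Matrix.mul_assoc A0 X0 B2, ← Matrix.mul_assoc, hRA0A0,
        Matrix.zero_mul]
    · rw [hB3', Matrix.mul_assoc, Matrix.mul_assoc, hB2L, Matrix.mul_zero,
        Matrix.mul_zero]
  · rintro ⟨h1, h2, h3⟩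
    rw [Matrix.sub_mul, Matrix.one_mul, sub_eq_zero] at h1 h2
    rw [Matrix.mul_sub, Matrix.mul_one, sub_eq_zero] at h3
    set X0 : QM q s := A0d * (B3 * B2d) with hX0
    set X2 : QM q₁ s₁ := Ad * (A2 * B1d) with hX2
    set X1 : QM q s₁ := A0d * ((C - A0 * X0 * B0) * B1d - A1 * X2) with hX1
    have kB : A0 * X0 * B0 * (1 - B1d * B1) = B3 := by
      rw [Matrix.mul_assoc (A0 * X0) B0, ← hB2, hX0]
      simp only [Matrix.mul_assoc]
      rw [← h3, ← Matrix.mul_assoc, ← h2]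
    have kA : A * X2 = A2 * B1d := by
      rw [hX2, ← Matrix.mul_assoc, ← Matrix.mul_assoc, ← h1]
    have hF : (1 - A0 * A0d) * ((C - A0 * X0 * B0) * B1d - A1 * X2) = 0 := by
      simp only [Matrix.mul_sub, ← Matrix.mul_assoc, ← hA2, hRA0A0,
        Matrix.zero_mul, ← hA, kA, sub_zero, sub_self]
    rw [Matrix.sub_mul, Matrix.one_mul, sub_eq_zero] at hF
    have hE : A0 * X1 = (C - A0 * X0 * B0) * B1d - A1 * X2 := by
      rw [hX1, ← Matrix.mul_assoc]
      exact hF.symm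
    have key : (C - A0 * X0 * B0) * B1d * B1 = C - A0 * X0 * B0 := by
      have h0 : (C - A0 * X0 * B0) * (1 - B1d * B1) = 0 := by
        rw [Matrix.sub_mul, kB, ← hB3, sub_self]
      rw [Matrix.mul_sub, Matrix.mul_one, sub_eq_zero] at h0
      rw [Matrix.mul_assoc]
      exact h0.symm
    refine ⟨X0, X1, X2, ?_⟩
    have : A0 * X1 * B1 + A1 * X2 * B1 = C - A0 * X0 * B0 := by
      rw [← Matrix.add_mul, hE, sub_add_cancel, key]
    rw [add_assoc, this]
    abel
end

section
/- Let A0 ∈ ℍ^{p×q}, A1 ∈ ℍ^{p×q₁}, B0 ∈ ℍ^{s×t}, B1 ∈ ℍ^{s₁×t}, C ∈ ℍ^{p×t} be quaternion matrices. Then there exist quaternion matrices X0 ∈ ℍ^{q×s}, X1 ∈ ℍ^{q×s₁}, X2 ∈ ℍ^{q₁×s₁} with A0·X0·B0 + A0·X1·B1 + A1·X2·B1 = C if and only if the three rank equalities hold: r[A0 A1 C] = r[A0 A1], r[B1 0; C A0] = r(B1) + r(A0), and r[C; B0; B1] = r[B0; B1], where the displayed matrices are block matrices with the indicated blocks and zero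 blocks of compatible sizes. -/
open Matrix

open Matrix Submodule Module

noncomputable section Aux

variable {K : Type*} [DivisionRing K]

namespace StmtAux

variable {m n p' : Type*}

/-- The row span of a matrix. -/
def rs (A : Matrix m n K) : Submodule K (n → K) := Submodule.span K (Set.range A)

/-- Abbreviation for the (left row) rank. -/
def qrk (A : Matrix m n K) : ℕ := finrank K (rs A)

lemma rs_eq_range [Fintype m] (A : Matrix m n K) :
    rs A = LinearMap.range A.vecMulLinear := (range_vecMulLinear A).symm

lemma mem_rs_iff [Fintype m] {A : Matrix m n K} {x : n → K} :
    x ∈ rs A ↔ ∃ v, v ᵥ* A = x := by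
  rw [rs_eq_range]
  exact ⟨fun ⟨v, h⟩ => ⟨v, h⟩, fun ⟨v, h⟩ => ⟨v, h⟩⟩

lemma row_mem_rs (A : Matrix m n K) (i : m) : A i ∈ rs A :=
  Submodule.subset_span ⟨i, rfl⟩

lemma row_mul [Fintype n] (M : Matrix m n K) (N : Matrix n p' K) (i : m) :
    (M * N) i = M i ᵥ* N := by
  funext j
  simp [Matrix.mul_apply, Matrix.vecMul, dotProduct]

lemma ext_of_vecMul [Fintype m] [DecidableEq m] {X Y : Matrix m n K}
    (h : ∀ v, v ᵥ* X = v ᵥ* Y) : X = Y := by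
  ext i j
  have := congrFun (h (Pi.single i 1)) j
  simpa [Matrix.single_one_vecMul] using this

lemma exists_matrix [Fintype m] [DecidableEq m] (f : (m → K) →ₗ[K] (n → K)) :
    ∃ M : Matrix m n K, M.vecMulLinear = f :=
  ⟨LinearMap.toMatrixRight' f, LinearMap.toMatrixRight'.symm_apply_apply f⟩

lemma exists_ginv_lin {V W : Type*} [AddCommGroup V] [AddCommGroup W] [Module K V] [Module K W]
    (f : V →ₗ[K] W) : ∃ g : W →ₗ[K] V, ∀ x, f (g (f x)) = f x := by
  obtain ⟨q, hq⟩ := (LinearMap.ker f).exists_isCompl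
  set fq : q →ₗ[K] W := f ∘ₗ q.subtype with hfq
  have hker : LinearMap.ker fq = ⊥ := by
    rw [Submodule.eq_bot_iff]
    rintro ⟨x, hx⟩ hmem
    have hxker : x ∈ LinearMap.ker f := by
      simpa [hfq] using hmem
    have : x = 0 := Submodule.disjoint_def.mp hq.disjoint x hxker hx
    simpa using this
  obtain ⟨h, hh⟩ := fq.exists_leftInverse_of_injective hker
  refine ⟨q.subtype ∘ₗ h, fun x => ?_⟩
  obtain ⟨y, hy, z, hz, hx⟩ := Submodule.mem_sup.mp
    (show x ∈ LinearMap.ker f ⊔ q by rw [hq.sup_eq_top]; trivial)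
  have hfx : f x = fq ⟨z, hz⟩ := by
    simp [hfq, ← hx, LinearMap.mem_ker.mp hy]
  have hid : h (fq ⟨z, hz⟩) = ⟨z, hz⟩ := by
    have := LinearMap.ext_iff.mp hh ⟨z, hz⟩
    simpa using this
  simp [hfx, hid]
  rfl

lemma exists_ginv [Fintype m] [Fintype n] [DecidableEq m] [DecidableEq n] (A : Matrix m n K) :
    ∃ G : Matrix n m K, A * G * A = A := by
  obtain ⟨g, hg⟩ := exists_ginv_lin A.vecMulLinear
  obtain ⟨G, hG⟩ := exists_matrix g
  refine ⟨G, ext_of_vecMul fun v => ?_⟩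
  have h1 := hg v
  rw [← hG] at h1
  simp only [Matrix.vecMulLinear_apply] at h1
  calc v ᵥ* (A * G * A) = v ᵥ* A ᵥ* G ᵥ* A := by
        rw [← Matrix.vecMul_vecMul, ← Matrix.vecMul_vecMul]
    _ = v ᵥ* A := h1


section RankLemmas

variable {l m m' n t : Type*}

lemma rs_fromRows [Fintype m] [Fintype m'] (C : Matrix m' n K) (B : Matrix m n K) :
    rs (fromRows C B) = rs C ⊔ rs B := by
  unfold rs
  rw [← Submodule.span_union]
  congr 1
  erw [← Set.Sum.elim_range]
  rfl

lemma rowAug_iff [Fintype m] [Fintype m'] [Fintype n] (C : Matrix m' n K) (B : Matrix m n K) :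
    qrk (fromRows C B) = qrk B ↔ ∃ Z : Matrix m' m K, Z * B = C := by
  rw [qrk, qrk, rs_fromRows]
  constructor
  · intro h
    have hle : rs B ≤ rs C ⊔ rs B := le_sup_right
    have heq : rs B = rs C ⊔ rs B := Submodule.eq_of_le_of_finrank_le hle (le_of_eq h)
    have hCle : rs C ≤ rs B := by rw [heq]; exact le_sup_left
    have hrow : ∀ i, ∃ v, v ᵥ* B = C i := fun i => mem_rs_iff.mp (hCle (row_mem_rs C i))
    choose Z hZ using hrow
    refine ⟨Matrix.of Z, ?_⟩
    funext i j
    rw [row_mul]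
    exact congrFun (hZ i) j
  · rintro ⟨Z, rfl⟩
    have hCle : rs (Z * B) ≤ rs B := by
      rw [rs]
      apply Submodule.span_le.mpr
      rintro x ⟨i, rfl⟩
      rw [row_mul]
      exact mem_rs_iff.mpr ⟨Z i, rfl⟩
    rw [sup_eq_right.mpr hCle]

lemma rs_mul_le [Fintype l] [Fintype m] (E : Matrix l m K) (M : Matrix m n K) :
    rs (E * M) ≤ rs M := by
  rw [rs]
  apply Submodule.span_le.mpr
  rintro x ⟨i, rfl⟩
  rw [row_mul]
  exact mem_rs_iff.mpr ⟨E i, rfl⟩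

lemma qrk_mul_le_left [Fintype l] [Fintype m] [Fintype n] (E : Matrix l m K)
    (M : Matrix m n K) : qrk (E * M) ≤ qrk M :=
  Submodule.finrank_mono (rs_mul_le E M)

lemma rs_mul_right_eq [Fintype n] (M : Matrix m n K) (F : Matrix n t K) :
    rs (M * F) = Submodule.map F.vecMulLinear (rs M) := by
  rw [rs, rs, Submodule.map_span]
  congr 1
  erw [← Set.range_comp]
  congr 1

lemma qrk_mul_le_right [Fintype m] [Fintype n] [Fintype t] (M : Matrix m n K)
    (F : Matrix n t K) : qrk (M * F) ≤ qrk M := by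
  rw [qrk, qrk, rs_mul_right_eq]
  exact Submodule.finrank_map_le _ _

lemma qrk_mul_left_eq [Fintype l] [Fintype m] [Fintype n] [DecidableEq m] (E : Matrix l m K)
    (E' : Matrix m l K) (hE : E' * E = 1) (M : Matrix m n K) :
    qrk (E * M) = qrk M := by
  refine le_antisymm (qrk_mul_le_left E M) ?_
  have h : E' * (E * M) = M := by rw [← Matrix.mul_assoc, hE, Matrix.one_mul]
  calc qrk M = qrk (E' * (E * M)) := by rw [h]
    _ ≤ qrk (E * M) := qrk_mul_le_left _ _

lemma qrk_mul_right_eq [Fintype m] [Fintype n] [Fintype t] [DecidableEq n] (M : Matrix m n K)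
    (F : Matrix n t K) (F' : Matrix t n K) (hF : F * F' = 1) :
    qrk (M * F) = qrk M := by
  refine le_antisymm (qrk_mul_le_right M F) ?_
  have h : M * F * F' = M := by rw [Matrix.mul_assoc, hF, Matrix.mul_one]
  calc qrk M = qrk (M * F * F') := by rw [h]
    _ ≤ qrk (M * F) := qrk_mul_le_right _ _

lemma rs_zero : rs (0 : Matrix m n K) = ⊥ := by
  rw [rs, Submodule.span_eq_bot]
  rintro x ⟨i, rfl⟩
  rfl

lemma qrk_zero : qrk (0 : Matrix m n K) = 0 := by
  rw [qrk, rs_zero, finrank_bot]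

end RankLemmas


section ColAug

variable {m n t : Type*} [Fintype m] [Fintype n] [Fintype t] [DecidableEq n]

lemma colAug_iff (A : Matrix m n K) (C : Matrix m t K) :
    qrk (fromCols A C) = qrk A ↔ ∃ Y : Matrix n t K, A * Y = C := by
  constructor
  · intro h
    set S := rs (fromCols A C) with hS
    set π : ((n ⊕ t) → K) →ₗ[K] (n → K) := LinearMap.funLeft K K Sum.inl with hπ
    have hmap : Submodule.map π S = rs A := by
      erw [hS, rs, rs, Submodule.map_span, ← Set.range_comp]
      congr 1
    have hmem : ∀ x ∈ S, π x ∈ rs A := fun x hx => hmap ▸ Submodule.mem_map_of_mem hx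
    set π' : S →ₗ[K] rs A := π.restrict hmem with hπ'
    have hsurj : Function.Surjective π' := by
      rintro ⟨y, hy⟩
      rw [← hmap] at hy
      obtain ⟨x, hx, hxy⟩ := hy
      exact ⟨⟨x, hx⟩, Subtype.ext hxy⟩
    have hinj : Function.Injective π' :=
      (LinearMap.injective_iff_surjective_of_finrank_eq_finrank h).mpr hsurj
    set e := LinearEquiv.ofBijective π' ⟨hinj, hsurj⟩ with he
    set L : rs A →ₗ[K] (t → K) :=
      (LinearMap.funLeft K K Sum.inr) ∘ₗ S.subtype ∘ₗ (e.symm : rs A →ₗ[K] S) with hL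
    obtain ⟨L', hL'⟩ := LinearMap.exists_extend L
    obtain ⟨Y, hY⟩ := exists_matrix L'
    have key : ∀ i, (e.symm ⟨A i, row_mem_rs A i⟩ : (n ⊕ t) → K)
        = fromCols A C i := by
      intro i
      have h1 : e ⟨fromCols A C i, row_mem_rs _ i⟩ = ⟨A i, row_mem_rs A i⟩ := by
        apply Subtype.ext
        show π (fromCols A C i) = A i
        funext j
        rfl
      rw [← h1, LinearEquiv.symm_apply_apply]
    refine ⟨Y, ?_⟩
    funext i j
    rw [row_mul]
    have h1 : (A i) ᵥ* Y = L' (A i) := by rw [← hY]; rfl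
    have h2 : L' (A i) = L ⟨A i, row_mem_rs A i⟩ := by
      conv_lhs => rw [show A i = (rs A).subtype ⟨A i, row_mem_rs A i⟩ from rfl]
      rw [← LinearMap.comp_apply, hL']
    rw [h1, h2, hL]
    simp only [LinearMap.comp_apply, LinearEquiv.coe_coe, Submodule.coe_subtype]
    rw [key i]
    rfl
  · rintro ⟨Y, rfl⟩
    set T : (n → K) →ₗ[K] ((n ⊕ t) → K) :=
      (LinearEquiv.sumArrowLequivProdArrow n t K K).symm.toLinearMap ∘ₗ
        (LinearMap.prod LinearMap.id Y.vecMulLinear) with hT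
    have hrange : rs (fromCols A (A * Y)) = Submodule.map T (rs A) := by
      erw [rs, rs, Submodule.map_span, ← Set.range_comp]
      congr 1
    have hinj : Function.Injective T := by
      intro a b hab
      funext j
      have := congrFun hab (Sum.inl j)
      simpa [hT, LinearEquiv.sumArrowLequivProdArrow_symm_apply_inl] using this
    rw [qrk, qrk, hrange]
    exact (LinearEquiv.finrank_eq (Submodule.equivMapOfInjective T hinj (rs A))).symm

end ColAug


section BlockRank

variable {s₁ p q t : Type*} [Fintype s₁] [Fintype p] [Fintype q] [Fintype t]

lemma rank_ge (B1 : Matrix s₁ t K) (A0 : Matrix p q K) (D : Matrix p t K)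
    (G : Matrix q p K) (hG : A0 * G * A0 = A0) (hGD : A0 * (G * D) = 0)
    (H : Matrix t s₁ K) (hH : B1 * H * B1 = B1) (hDH : D * (H * B1) = 0) :
    qrk B1 + qrk A0 + qrk D ≤ qrk (fromBlocks B1 (0 : Matrix s₁ q K) D A0) := by
  set N := fromBlocks B1 (0 : Matrix s₁ q K) D A0 with hN
  set V := rs N with hV
  set π : ((t ⊕ q) → K) →ₗ[K] (q → K) := LinearMap.funLeft K K Sum.inr with hπ
  set g : V →ₗ[K] (q → K) := π ∘ₗ V.subtype with hg
  have hrn : finrank K V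
      = finrank K (LinearMap.range g) + finrank K (LinearMap.ker g) :=
    (LinearMap.finrank_range_add_finrank_ker g).symm
  have hrange : LinearMap.range g = rs A0 := by
    rw [hg, LinearMap.range_comp, Submodule.range_subtype, hV, hN, rs, Submodule.map_span,
      ← Set.range_comp (f := (fromBlocks B1 (0 : Matrix s₁ q K) D A0 : s₁ ⊕ p → t ⊕ q → K))]
    apply le_antisymm
    · rw [Submodule.span_le]
      rintro x ⟨i, rfl⟩
      cases i with
      | inl a =>
          have h0 : (⇑π ∘ fromBlocks B1 (0 : Matrix s₁ q K) D A0) (Sum.inl a) = 0 := by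
            funext j; rfl
          rw [h0]
          exact Submodule.zero_mem _
      | inr b =>
          exact Submodule.subset_span ⟨b, rfl⟩
    · rw [rs, Submodule.span_le]
      rintro x ⟨b, rfl⟩
      exact Submodule.subset_span ⟨Sum.inr b, rfl⟩
  have hkereq : finrank K (LinearMap.ker g)
      = finrank K (V ⊓ LinearMap.ker π : Submodule K ((t ⊕ q) → K)) := by
    have h1 : LinearMap.ker g = Submodule.comap V.subtype (LinearMap.ker π) := by
      rw [hg, LinearMap.ker_comp]
    have h2 : Submodule.map V.subtype (LinearMap.ker g) = V ⊓ LinearMap.ker π := by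
      rw [h1, Submodule.map_comap_subtype]
    rw [← h2]
    exact LinearEquiv.finrank_eq
      (Submodule.equivMapOfInjective V.subtype (Submodule.injective_subtype V) _)
  set jl : (t → K) →ₗ[K] ((t ⊕ q) → K) :=
    (LinearEquiv.sumArrowLequivProdArrow t q K K).symm.toLinearMap ∘ₗ
      (LinearMap.prod LinearMap.id 0) with hjl
  have hjlapp : ∀ x : t → K, jl x = Sum.elim x 0 := by
    intro x
    funext i
    cases i with
    | inl j => simp [hjl]
    | inr j => simp [hjl]
  have hjl_inj : Function.Injective jl := by
    intro a b hab
    funext j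
    have := congrFun hab (Sum.inl j)
    simpa [hjlapp] using this
  have hmaps : Submodule.map jl (rs B1 ⊔ rs D) ≤ V ⊓ LinearMap.ker π := by
    rintro _ ⟨x, hx, rfl⟩
    obtain ⟨xb, hxb, xd, hxd, rfl⟩ := Submodule.mem_sup.mp hx
    obtain ⟨w, hw⟩ := mem_rs_iff.mp hxb
    obtain ⟨v0, hv0⟩ := mem_rs_iff.mp hxd
    set v : p → K := v0 - v0 ᵥ* (A0 * G) with hv
    have hvA : v ᵥ* A0 = 0 := by
      rw [hv, Matrix.sub_vecMul, Matrix.vecMul_vecMul, hG, sub_self]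
    have hvD : v ᵥ* D = v0 ᵥ* D := by
      have hGD' : A0 * G * D = 0 := by rw [Matrix.mul_assoc]; exact hGD
      rw [hv, Matrix.sub_vecMul, Matrix.vecMul_vecMul, hGD', Matrix.vecMul_zero, sub_zero]
    constructor
    · rw [hV]
      apply mem_rs_iff.mpr
      refine ⟨Sum.elim w v, ?_⟩
      funext i
      cases i with
      | inl j =>
          have h1 : (Sum.elim w v ᵥ* N) (Sum.inl j) = (w ᵥ* B1) j + (v ᵥ* D) j := by
            simp [hN, Matrix.vecMul, dotProduct, Fintype.sum_sum_type]
          rw [h1, hw, hvD, hv0, hjlapp]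
          rfl
      | inr j =>
          have h1 : (Sum.elim w v ᵥ* N) (Sum.inr j) = (v ᵥ* A0) j := by
            simp [hN, Matrix.vecMul, dotProduct, Fintype.sum_sum_type]
          rw [h1, hvA, hjlapp]
          rfl
    · show jl (xb + xd) ∈ LinearMap.ker π
      rw [LinearMap.mem_ker]
      funext j
      rw [hjlapp]
      rfl
  have hsupfin : finrank K (rs B1 ⊔ rs D : Submodule K (t → K)) = qrk B1 + qrk D := by
    have hinf : rs B1 ⊓ rs D = ⊥ := by
      rw [Submodule.eq_bot_iff]
      rintro x ⟨hxB, hxD⟩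
      obtain ⟨w, hw⟩ := mem_rs_iff.mp hxB
      obtain ⟨v, hvv⟩ := mem_rs_iff.mp hxD
      have hH' : B1 * (H * B1) = B1 := by rw [← Matrix.mul_assoc]; exact hH
      have h1 : x ᵥ* (H * B1) = x := by
        rw [← hw, Matrix.vecMul_vecMul, hH']
      have h2 : x ᵥ* (H * B1) = 0 := by
        rw [← hvv, Matrix.vecMul_vecMul, hDH, Matrix.vecMul_zero]
      rw [← h1, h2]
    have hkey := Submodule.finrank_sup_add_finrank_inf_eq (rs B1) (rs D)
    rw [hinf, finrank_bot, add_zero] at hkey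
    exact hkey
  have hker_ge : qrk B1 + qrk D ≤ finrank K (LinearMap.ker g) := by
    rw [hkereq, ← hsupfin]
    calc finrank K (rs B1 ⊔ rs D : Submodule K (t → K))
        = finrank K (Submodule.map jl (rs B1 ⊔ rs D)) :=
          (LinearEquiv.finrank_eq (Submodule.equivMapOfInjective jl hjl_inj _))
      _ ≤ finrank K (V ⊓ LinearMap.ker π : Submodule K ((t ⊕ q) → K)) :=
          Submodule.finrank_mono hmaps
  have hbr1 : finrank K V = qrk N := rfl
  have hbr2 : finrank K (rs A0) = qrk A0 := rfl
  rw [hrange] at hrn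
  omega

end BlockRank


section BlockRank2

variable {s₁ p q t : Type*} [Fintype s₁] [Fintype p] [Fintype q] [Fintype t]
variable [DecidableEq s₁] [DecidableEq p] [DecidableEq q] [DecidableEq t]

lemma qrk_blockDiag_le (B1 : Matrix s₁ t K) (A0 : Matrix p q K) :
    qrk (fromBlocks B1 (0 : Matrix s₁ q K) (0 : Matrix p t K) A0) ≤ qrk B1 + qrk A0 := by
  set jl : (t → K) →ₗ[K] ((t ⊕ q) → K) :=
    (LinearEquiv.sumArrowLequivProdArrow t q K K).symm.toLinearMap ∘ₗ
      (LinearMap.prod LinearMap.id 0) with hjl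
  set jr : (q → K) →ₗ[K] ((t ⊕ q) → K) :=
    (LinearEquiv.sumArrowLequivProdArrow t q K K).symm.toLinearMap ∘ₗ
      (LinearMap.prod 0 LinearMap.id) with hjr
  have hjlapp : ∀ x : t → K, jl x = Sum.elim x 0 := by
    intro x; funext i
    cases i with
    | inl j => simp [hjl]
    | inr j => simp [hjl]
  have hjrapp : ∀ x : q → K, jr x = Sum.elim (0 : t → K) x := by
    intro x; funext i
    cases i with
    | inl j => simp [hjr]
    | inr j => simp [hjr]
  have hjl_inj : Function.Injective jl := by
    intro a b hab
    funext j
    have := congrFun hab (Sum.inl j)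
    simpa [hjlapp] using this
  have hjr_inj : Function.Injective jr := by
    intro a b hab
    funext j
    have := congrFun hab (Sum.inr j)
    simpa [hjrapp] using this
  have h1 : rs (fromBlocks B1 (0 : Matrix s₁ q K) (0 : Matrix p t K) A0)
      ≤ Submodule.map jl (rs B1) ⊔ Submodule.map jr (rs A0) := by
    rw [rs, Submodule.span_le]
    rintro x ⟨i, rfl⟩
    cases i with
    | inl a =>
        have hrow : fromBlocks B1 (0 : Matrix s₁ q K) (0 : Matrix p t K) A0 (Sum.inl a)
            = jl (B1 a) := by
          rw [hjlapp]
          funext x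
          cases x <;> rfl
        rw [hrow]
        exact SetLike.le_def.mp le_sup_left (Submodule.mem_map_of_mem (row_mem_rs B1 a))
    | inr b =>
        have hrow : fromBlocks B1 (0 : Matrix s₁ q K) (0 : Matrix p t K) A0 (Sum.inr b)
            = jr (A0 b) := by
          rw [hjrapp]
          funext x
          cases x <;> rfl
        rw [hrow]
        exact SetLike.le_def.mp le_sup_right (Submodule.mem_map_of_mem (row_mem_rs A0 b))
  calc qrk (fromBlocks B1 (0 : Matrix s₁ q K) (0 : Matrix p t K) A0)
      ≤ finrank K (Submodule.map jl (rs B1) ⊔ Submodule.map jr (rs A0) :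
          Submodule K ((t ⊕ q) → K)) := Submodule.finrank_mono h1
    _ ≤ finrank K (Submodule.map jl (rs B1)) + finrank K (Submodule.map jr (rs A0)) :=
          Submodule.finrank_add_le_finrank_add_finrank _ _
    _ = qrk B1 + qrk A0 := by
          rw [← LinearEquiv.finrank_eq (Submodule.equivMapOfInjective jl hjl_inj (rs B1)),
            ← LinearEquiv.finrank_eq (Submodule.equivMapOfInjective jr hjr_inj (rs A0))]
          rfl

lemma qrk_block_transform (B1 : Matrix s₁ t K) (A0 : Matrix p q K) (C : Matrix p t K)
    (X : Matrix q t K) (Y : Matrix p s₁ K) :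
    qrk (fromBlocks B1 (0 : Matrix s₁ q K) (Y * B1 + C + A0 * X) A0)
      = qrk (fromBlocks B1 (0 : Matrix s₁ q K) C A0) := by
  have hU : fromBlocks (1 : Matrix s₁ s₁ K) (0 : Matrix s₁ p K) Y (1 : Matrix p p K) *
      (fromBlocks B1 (0 : Matrix s₁ q K) C A0 *
        fromBlocks (1 : Matrix t t K) (0 : Matrix t q K) X (1 : Matrix q q K))
      = fromBlocks B1 (0 : Matrix s₁ q K) (Y * B1 + C + A0 * X) A0 := by
    rw [← Matrix.mul_assoc]
    simp [Matrix.fromBlocks_multiply, Matrix.add_mul]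
  have hE : fromBlocks (1 : Matrix s₁ s₁ K) (0 : Matrix s₁ p K) (-Y) (1 : Matrix p p K) *
      fromBlocks (1 : Matrix s₁ s₁ K) (0 : Matrix s₁ p K) Y (1 : Matrix p p K)
      = (1 : Matrix (s₁ ⊕ p) (s₁ ⊕ p) K) := by
    simp [Matrix.fromBlocks_multiply, ← Matrix.fromBlocks_one]
  have hF : fromBlocks (1 : Matrix t t K) (0 : Matrix t q K) X (1 : Matrix q q K) *
      fromBlocks (1 : Matrix t t K) (0 : Matrix t q K) (-X) (1 : Matrix q q K)
      = (1 : Matrix (t ⊕ q) (t ⊕ q) K) := by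
    simp [Matrix.fromBlocks_multiply, ← Matrix.fromBlocks_one]
  rw [← hU, qrk_mul_left_eq _ _ hE, qrk_mul_right_eq _ _ _ hF]

lemma blockRank_iff (B1 : Matrix s₁ t K) (A0 : Matrix p q K) (C : Matrix p t K) :
    qrk (fromBlocks B1 (0 : Matrix s₁ q K) C A0) = qrk B1 + qrk A0 ↔
      ∃ (X : Matrix q t K) (Y : Matrix p s₁ K), A0 * X + Y * B1 = C := by
  obtain ⟨G, hG⟩ := exists_ginv A0
  obtain ⟨H, hH⟩ := exists_ginv B1
  have hH' : B1 * (H * B1) = B1 := by rw [← Matrix.mul_assoc]; exact hH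
  constructor
  · intro h
    set E := C - A0 * (G * C) with hEdef
    set D := E - E * (H * B1) with hDdef
    have hGx : ∀ (Z : Matrix q t K), A0 * (G * (A0 * Z)) = A0 * Z := by
      intro Z
      have h' := congrArg (fun M => M * Z) hG
      simpa [Matrix.mul_assoc] using h'
    have hGE : A0 * (G * E) = 0 := by
      rw [hEdef, Matrix.mul_sub, Matrix.mul_sub, hGx, sub_self]
    have hGD : A0 * (G * D) = 0 := by
      have h2 : A0 * (G * (E * (H * B1))) = (A0 * (G * E)) * (H * B1) := by
        simp [Matrix.mul_assoc]
      rw [hDdef, Matrix.mul_sub, Matrix.mul_sub, h2, hGE, Matrix.zero_mul, sub_self]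
    have hDH : D * (H * B1) = 0 := by
      have h2 : (E * (H * B1)) * (H * B1) = E * (H * B1) := by
        calc (E * (H * B1)) * (H * B1) = E * (H * (B1 * (H * B1))) := by
              simp [Matrix.mul_assoc]
          _ = E * (H * B1) := by rw [hH']
      rw [hDdef, Matrix.sub_mul, h2, sub_self]
    have hDeq : D = (-(E * H)) * B1 + C + A0 * (-(G * C)) := by
      rw [hDdef, hEdef]
      simp [Matrix.neg_mul, Matrix.mul_neg, Matrix.mul_assoc]
      abel
    have htr : qrk (fromBlocks B1 (0 : Matrix s₁ q K) D A0)
        = qrk (fromBlocks B1 (0 : Matrix s₁ q K) C A0) := by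
      rw [hDeq]
      exact qrk_block_transform B1 A0 C (-(G * C)) (-(E * H))
    have hge := rank_ge B1 A0 D G hG hGD H hH hDH
    have hD0 : qrk D = 0 := by omega
    have hDbot : D = 0 := by
      have hbot : rs D = ⊥ := Submodule.finrank_eq_zero.mp hD0
      funext i j
      have : D i ∈ rs D := row_mem_rs D i
      rw [hbot] at this
      have := Submodule.mem_bot K |>.mp this
      rw [this]
      rfl
    have hEeq : E * (H * B1) = E := by
      have := sub_eq_zero.mp (hDdef ▸ hDbot)
      exact this.symm
    refine ⟨G * C, E * H, ?_⟩
    have : (E * H) * B1 = E := by rw [Matrix.mul_assoc, hEeq]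
    rw [this, hEdef]
    abel
  · rintro ⟨X, Y, hXY⟩
    have h0 : (-Y) * B1 + C + A0 * (-X) = 0 := by
      rw [Matrix.neg_mul, Matrix.mul_neg, ← hXY]
      abel
    have htr := qrk_block_transform B1 A0 C (-X) (-Y)
    rw [h0] at htr
    rw [← htr]
    refine le_antisymm (qrk_blockDiag_le B1 A0) ?_
    have hge := rank_ge B1 A0 (0 : Matrix p t K) G hG
      (by rw [Matrix.mul_zero, Matrix.mul_zero]) H hH (by rw [Matrix.zero_mul])
    rw [qrk_zero] at hge
    omega

end BlockRank2

end StmtAux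
end Aux


lemma qrank_eq_qrk {m n : Type*} (A : Matrix m n (Quaternion ℝ)) :
    qrank A = StmtAux.qrk A := rfl

/-- solvability of `A0 X0 B0 + A0 X1 B1 + A1 X2 B1 = C` in terms
of three rank equalities. -/
theorem stmt11 {p q q₁ s s₁ t : ℕ}
    (A0 : QM p q) (A1 : QM p q₁) (B0 : QM s t) (B1 : QM s₁ t) (C : QM p t) :
    (∃ (X0 : QM q s) (X1 : QM q s₁) (X2 : QM q₁ s₁),
        A0 * X0 * B0 + A0 * X1 * B1 + A1 * X2 * B1 = C) ↔
      (qrank (fromCols (fromCols A0 A1) C) = qrank (fromCols A0 A1) ∧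
       qrank (fromBlocks B1 0 C A0) = qrank B1 + qrank A0 ∧
       qrank (fromRows C (fromRows B0 B1)) = qrank (fromRows B0 B1)) := by
  simp only [qrank_eq_qrk]
  rw [StmtAux.colAug_iff (fromCols A0 A1) C, StmtAux.blockRank_iff B1 A0 C,
    StmtAux.rowAug_iff C (fromRows B0 B1)]
  constructor
  · rintro ⟨X0, X1, X2, rfl⟩
    refine ⟨⟨fromRows (X0 * B0 + X1 * B1) (X2 * B1), ?_⟩,
      ⟨X0 * B0 + X1 * B1, A1 * X2, ?_⟩,
      ⟨fromCols (A0 * X0) (A0 * X1 + A1 * X2), ?_⟩⟩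
    · rw [fromCols_mul_fromRows]
      simp only [Matrix.mul_add, Matrix.mul_assoc]
    · simp only [Matrix.mul_add, Matrix.mul_assoc]
    · rw [fromCols_mul_fromRows]
      simp only [Matrix.add_mul, Matrix.mul_assoc]
      abel
  · rintro ⟨⟨Y, hY⟩, ⟨V, W, hVW⟩, ⟨Z, hZ⟩⟩
    obtain ⟨G, hG⟩ := StmtAux.exists_ginv (K := Quaternion ℝ) A0
    obtain ⟨H, hH⟩ := StmtAux.exists_ginv (K := Quaternion ℝ) B1
    have hU : A0 * Y.toRows₁ + A1 * Y.toRows₂ = C := by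
      rw [← fromCols_mul_fromRows, fromRows_toRows]
      exact hY
    have hZ' : Z.toCols₁ * B0 + Z.toCols₂ * B1 = C := by
      rw [← fromCols_mul_fromRows, fromCols_toCols]
      exact hZ
    set U0 := Y.toRows₁
    set U1 := Y.toRows₂
    set Z0 := Z.toCols₁
    set Z1 := Z.toCols₂
    set E := C - A0 * (G * C) with hE
    refine ⟨G * Z0, G * Z1 + U0 * H - G * (C * H), U1 * H, ?_⟩
    have hbux : B1 * (H * B1) = B1 := by rw [← Matrix.mul_assoc]; exact hH
    have haux1 : A0 * (G * (A0 * V)) = A0 * V := by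
      have h' := congrArg (fun M => M * V) hG
      simpa [Matrix.mul_assoc] using h'
    have haux2 : A0 * (G * (A0 * (V * (H * B1)))) = A0 * (V * (H * B1)) := by
      have h' := congrArg (fun M => M * (V * (H * B1))) hG
      simpa [Matrix.mul_assoc] using h'
    calc A0 * (G * Z0) * B0 + A0 * (G * Z1 + U0 * H - G * (C * H)) * B1 + A1 * (U1 * H) * B1
        = A0 * (G * (Z0 * B0 + Z1 * B1)) + (A0 * U0 + A1 * U1) * (H * B1)
            - A0 * (G * (C * (H * B1))) := by
          simp only [Matrix.mul_add, Matrix.add_mul, Matrix.sub_mul, Matrix.mul_sub,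
            Matrix.mul_assoc]
          abel
      _ = A0 * (G * C) + C * (H * B1) - A0 * (G * (C * (H * B1))) := by rw [hZ', hU]
      _ = C := by
          rw [← hVW]
          simp only [Matrix.mul_add, Matrix.add_mul, Matrix.mul_assoc, hbux, haux1, haux2]
          abel
end

section
/- Let A0 ∈ ℍ^{p×q}, A1 ∈ ℍ^{p×q₁}, B0 ∈ ℍ^{s×t}, B1 ∈ ℍ^{s₁×t}, C ∈ ℍ^{p×t} be quaternion matrices. Set A = R_{A0}·A1, A2 = R_{A0}·C, B2 = B0·L_{B1}, B3 = C·L_{B1}, and assume R_A·A2 = 0, R_{A0}·B3 = 0, and B3·L_{B2} = 0. Then quaternion matrices X0 ∈ ℍ^{q×s}, X1 ∈ ℍ^{q×s₁}, X2 ∈ ℍ^{q₁×s₁} satisfy A0·X0·B0 + A0·X1·B1 + A1·X2·B1 = C if and only if there exist quaternion matrices U1, ..., U6 of appropriate sizes such that X0 = A0†·B3·B2† + L_{A0}·U5 + U6·R_{B2}, X2 = A†·A2·B1† + L_A·U3 + U4·R_{B1}, and X1 = A0†·(C − A0·X0·B0 − A1·X2·B1)·B1† + L_{A0}·U1 + U2·R_{B1}.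 -/
open Matrix

/-- General solution form: if `A X B = C` then `X` can be written as
`Ad C Bd + (1 - Ad A) U + V (1 - B Bd)`, using only `A Ad A = A`, `B Bd B = B`. -/
lemma solve_form {m n k l : ℕ} (A : QM m n) (Ad : QM n m) (B : QM k l) (Bd : QM l k)
    (hA : A * Ad * A = A) (hB : B * Bd * B = B) (X : QM n k) (C : QM m l)
    (hC : A * X * B = C) :
    ∃ (U V : QM n k),
      X = Ad * C * Bd + (1 - Ad * A) * U + V * (1 - B * Bd) := by
  refine ⟨X - Ad * C * Bd, Ad * A * (X - Ad * C * Bd), ?_⟩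
  subst hC
  have gA : ∀ {r : ℕ} (M : Matrix (Fin n) (Fin r) (Quaternion ℝ)),
      A * (Ad * (A * M)) = A * M := fun M => by
    rw [← Matrix.mul_assoc, ← Matrix.mul_assoc, hA]
  have gB : ∀ {r : ℕ} (M : Matrix (Fin l) (Fin r) (Quaternion ℝ)),
      B * (Bd * (B * M)) = B * M := fun M => by
    rw [← Matrix.mul_assoc, ← Matrix.mul_assoc, hB]
  have gB0 : B * (Bd * B) = B := by rw [← Matrix.mul_assoc, hB]
  simp only [Matrix.mul_sub, Matrix.sub_mul, Matrix.mul_one, Matrix.one_mul, Matrix.mul_assoc,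
    gA, gB, gB0]
  abel

set_option maxHeartbeats 1600000 in
/-- under the solvability conditions, `(X0, X1, X2)` solves
`A0 X0 B0 + A0 X1 B1 + A1 X2 B1 = C` iff it has the displayed form. -/

theorem stmt12 {p q q₁ s s₁ t : ℕ}
    (A0 : QM p q) (A1 : QM p q₁) (B0 : QM s t) (B1 : QM s₁ t) (C : QM p t)
    (A0d : QM q p) (hA0d : IsMP A0 A0d)
    (B1d : QM t s₁) (hB1d : IsMP B1 B1d)
    (A : QM p q₁) (hA : A = (1 - A0 * A0d) * A1)
    (Ad : QM q₁ p) (hAd : IsMP A Ad)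
    (A2 : QM p t) (hA2 : A2 = (1 - A0 * A0d) * C)
    (B2 : QM s t) (hB2 : B2 = B0 * (1 - B1d * B1))
    (B2d : QM t s) (hB2d : IsMP B2 B2d)
    (B3 : QM p t) (hB3 : B3 = C * (1 - B1d * B1))
    (hcond1 : (1 - A * Ad) * A2 = 0)
    (hcond2 : (1 - A0 * A0d) * B3 = 0)
    (hcond3 : B3 * (1 - B2d * B2) = 0)
    (X0 : QM q s) (X1 : QM q s₁) (X2 : QM q₁ s₁) :
    A0 * X0 * B0 + A0 * X1 * B1 + A1 * X2 * B1 = C ↔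
      ∃ (U1 U2 : QM q s₁) (U3 U4 : QM q₁ s₁) (U5 U6 : QM q s),
        X0 = A0d * B3 * B2d + (1 - A0d * A0) * U5 + U6 * (1 - B2 * B2d) ∧
        X2 = Ad * A2 * B1d + (1 - Ad * A) * U3 + U4 * (1 - B1 * B1d) ∧
        X1 = A0d * (C - A0 * X0 * B0 - A1 * X2 * B1) * B1d
              + (1 - A0d * A0) * U1 + U2 * (1 - B1 * B1d) := by
  obtain ⟨hA0₁, -, -, -⟩ := hA0d
  obtain ⟨hB1₁, -, -, -⟩ := hB1d
  obtain ⟨hA₁, -, -, -⟩ := hAd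
  obtain ⟨hB2₁, -, -, -⟩ := hB2d
  -- right-associated pseudoinverse facts
  have tA0 : A0 * (A0d * A0) = A0 := by rw [← Matrix.mul_assoc, hA0₁]
  have gA0 : ∀ {r : ℕ} (M : Matrix (Fin q) (Fin r) (Quaternion ℝ)),
      A0 * (A0d * (A0 * M)) = A0 * M := fun M => by
    rw [← Matrix.mul_assoc, ← Matrix.mul_assoc, hA0₁]
  have tB1 : B1 * (B1d * B1) = B1 := by rw [← Matrix.mul_assoc, hB1₁]
  have tA : A * (Ad * A) = A := by rw [← Matrix.mul_assoc, hA₁]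
  have gA : ∀ {r : ℕ} (M : Matrix (Fin q₁) (Fin r) (Quaternion ℝ)),
      A * (Ad * (A * M)) = A * M := fun M => by
    rw [← Matrix.mul_assoc, ← Matrix.mul_assoc, hA₁]
  have tB2 : B2 * (B2d * B2) = B2 := by rw [← Matrix.mul_assoc, hB2₁]
  -- consequences of the solvability conditions, right associated
  have c1 : A * (Ad * A2) = A2 := by
    have := hcond2
    have h := sub_eq_zero.mp (by
      simpa only [Matrix.sub_mul, Matrix.one_mul, Matrix.mul_assoc] using hcond1)
    exact h.symm
  have c1g : ∀ {r : ℕ} (M : Matrix (Fin t) (Fin r) (Quaternion ℝ)),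
      A * (Ad * (A2 * M)) = A2 * M := fun M => by
    rw [← Matrix.mul_assoc, ← Matrix.mul_assoc, Matrix.mul_assoc A Ad A2, c1]
  have c2 : A0 * (A0d * B3) = B3 := by
    have h := sub_eq_zero.mp (by
      simpa only [Matrix.sub_mul, Matrix.one_mul, Matrix.mul_assoc] using hcond2)
    exact h.symm
  have c2g : ∀ {r : ℕ} (M : Matrix (Fin t) (Fin r) (Quaternion ℝ)),
      A0 * (A0d * (B3 * M)) = B3 * M := fun M => by
    rw [← Matrix.mul_assoc, ← Matrix.mul_assoc, Matrix.mul_assoc A0 A0d B3, c2]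
  have c3 : B3 * (B2d * B2) = B3 := by
    have h := sub_eq_zero.mp (by
      simpa only [Matrix.mul_sub, Matrix.mul_one] using hcond3)
    exact h.symm
  have cA2B : A2 * (B1d * B1) = A2 := by
    have h : A2 * (B1d * B1) = A2 - A0 * (A0d * (A2 * (B1d * B1))) - B3 + A0 * (A0d * B3) := by
      rw [hA2, hB3]
      simp only [Matrix.mul_sub, Matrix.sub_mul, Matrix.mul_one, Matrix.one_mul,
        Matrix.mul_assoc, gA0]
      abel
    have h2 : A0 * (A0d * (A2 * (B1d * B1))) = 0 := by
      rw [hA2]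
      simp only [Matrix.mul_sub, Matrix.sub_mul, Matrix.mul_one, Matrix.one_mul,
        Matrix.mul_assoc, gA0, sub_self]
    rw [h, h2, c2, sub_zero]
    abel
  constructor
  · intro h
    have eq0 : A0 * X0 * B2 = B3 := by
      rw [hB2, hB3, ← h]
      simp only [Matrix.mul_sub, Matrix.sub_mul, Matrix.add_mul, Matrix.mul_add,
        Matrix.mul_one, Matrix.one_mul, Matrix.mul_assoc, tB1]
      abel
    have eq2 : A * X2 * B1 = A2 := by
      rw [hA2, hA, ← h]
      simp only [Matrix.mul_sub, Matrix.sub_mul, Matrix.add_mul, Matrix.mul_add,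
        Matrix.mul_one, Matrix.one_mul, Matrix.mul_assoc, gA0]
      abel
    have eq1 : A0 * X1 * B1 = C - A0 * X0 * B0 - A1 * X2 * B1 := by
      rw [← h]; abel
    obtain ⟨U5, U6, h0⟩ := solve_form A0 A0d B2 B2d hA0₁ hB2₁ X0 B3 eq0
    obtain ⟨U3, U4, h2⟩ := solve_form A Ad B1 B1d hA₁ hB1₁ X2 A2 eq2
    obtain ⟨U1, U2, h1⟩ := solve_form A0 A0d B1 B1d hA0₁ hB1₁ X1 _ eq1
    exact ⟨U1, U2, U3, U4, U5, U6, h0, h2, h1⟩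
  · rintro ⟨U1, U2, U3, U4, U5, U6, h0, h2, h1⟩
    have f0 : A0 * X0 * B2 = B3 := by
      rw [h0]
      simp only [Matrix.mul_sub, Matrix.sub_mul, Matrix.add_mul, Matrix.mul_add,
        Matrix.mul_one, Matrix.one_mul, Matrix.mul_assoc, tA0, gA0, tB2, c3, c2]
      abel
    have f2 : A * X2 * B1 = A2 := by
      rw [h2]
      simp only [Matrix.mul_sub, Matrix.sub_mul, Matrix.add_mul, Matrix.mul_add,
        Matrix.mul_one, Matrix.one_mul, Matrix.mul_assoc, tA, gA, tB1, c1g, cA2B]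
      abel
    have f2' : A1 * X2 * B1 = A0 * (A0d * (A1 * (X2 * B1))) + A2 := by
      have hh : A * X2 * B1 = A1 * (X2 * B1) - A0 * (A0d * (A1 * (X2 * B1))) := by
        rw [hA]
        simp only [Matrix.mul_sub, Matrix.sub_mul, Matrix.mul_one, Matrix.one_mul,
          Matrix.mul_assoc]
      rw [f2] at hh
      rw [Matrix.mul_assoc, hh]
      abel
    have fE1 : A0 * (A0d * (C - A0 * X0 * B0 - A1 * X2 * B1))
        = C - A0 * X0 * B0 - A1 * X2 * B1 := by
      have hC : A0 * (A0d * C) = C - A2 := by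
        rw [hA2]
        simp only [Matrix.mul_sub, Matrix.sub_mul, Matrix.mul_one, Matrix.one_mul,
          Matrix.mul_assoc, gA0]
        abel
      rw [f2']
      simp only [Matrix.mul_sub, Matrix.mul_add, Matrix.mul_assoc, gA0, hC]
      rw [show A0 * (A0d * A2) = 0 by
        rw [hA2]
        simp only [Matrix.mul_sub, Matrix.sub_mul, Matrix.mul_one, Matrix.one_mul,
          Matrix.mul_assoc, gA0, sub_self]]
      abel
    have fE2 : (C - A0 * X0 * B0 - A1 * X2 * B1) * (B1d * B1)
        = C - A0 * X0 * B0 - A1 * X2 * B1 := by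
      have hq : (C - A0 * X0 * B0 - A1 * X2 * B1) * (1 - B1d * B1) = 0 := by
        have hB0 : A0 * X0 * B0 * (1 - B1d * B1) = B3 := by
          rw [Matrix.mul_assoc (A0 * X0) B0 _, ← hB2]
          exact f0
        have hB1' : A1 * X2 * B1 * (1 - B1d * B1) = 0 := by
          rw [Matrix.mul_assoc (A1 * X2) B1 _]
          rw [show B1 * (1 - B1d * B1) = 0 by
            simp only [Matrix.mul_sub, Matrix.mul_one, tB1, sub_self]]
          rw [Matrix.mul_zero]
        rw [Matrix.sub_mul, Matrix.sub_mul, hB0, hB1', ← hB3, sub_zero, sub_self]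
      have : (C - A0 * X0 * B0 - A1 * X2 * B1) * (B1d * B1)
          = C - A0 * X0 * B0 - A1 * X2 * B1
            - (C - A0 * X0 * B0 - A1 * X2 * B1) * (1 - B1d * B1) := by
        rw [Matrix.mul_sub, Matrix.mul_one]
        abel
      rw [this, hq, sub_zero]
    have zB1 : (1 - B1 * B1d) * B1 = 0 := by
      rw [Matrix.sub_mul, Matrix.one_mul, Matrix.mul_assoc, tB1, sub_self]
    have zA0 : A0 * (1 - A0d * A0) = 0 := by
      rw [Matrix.mul_sub, Matrix.mul_one, tA0, sub_self]
    have f1 : A0 * X1 * B1 = C - A0 * X0 * B0 - A1 * X2 * B1 := by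
      rw [h1]
      simp only [Matrix.mul_add, Matrix.add_mul]
      rw [show A0 * ((1 - A0d * A0) * U1) * B1 = 0 by
        rw [← Matrix.mul_assoc, zA0, Matrix.zero_mul, Matrix.zero_mul]]
      rw [show A0 * (U2 * (1 - B1 * B1d)) * B1 = 0 by
        rw [Matrix.mul_assoc, Matrix.mul_assoc U2 _ B1, zB1, Matrix.mul_zero, Matrix.mul_zero]]
      rw [show A0 * (A0d * (C - A0 * X0 * B0 - A1 * X2 * B1) * B1d) * B1
          = C - A0 * X0 * B0 - A1 * X2 * B1 by
        rw [Matrix.mul_assoc, Matrix.mul_assoc, Matrix.mul_assoc, fE2, fE1]]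
      abel
    rw [f1]
    abel
end

section
/- Let A ∈ ℍ^{p×q}, M ∈ ℍ^{p×s}, F ∈ ℍ^{t×s}, N ∈ ℍ^{r×q}, K ∈ ℍ^{r×u} be quaternion matrices. Then r[A M·L_F; R_K·N 0] = r[A M 0; N 0 K; 0 F 0] − r(K) − r(F), where the displayed matrices are block matrices with the indicated blocks and zero blocks of compatible sizes. -/
open Matrix

set_option synthInstance.maxHeartbeats 1000000
set_option maxHeartbeats 1000000
open Matrix
local notation "ℍ" => Quaternion ℝ
namespace Stmt13Aux
variable {m n m' n' u : Type*}

noncomputable def rowSpace (A : Matrix m n ℍ) : Submodule ℍ (n → ℍ) :=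
  Submodule.span ℍ (Set.range fun i => A i)

noncomputable def rmul [Fintype n] (Q : Matrix n n' ℍ) : (n → ℍ) →ₗ[ℍ] (n' → ℍ) where
  toFun v := fun j => ∑ i, v i * Q i j
  map_add' v w := by funext j; simp [add_mul, Finset.sum_add_distrib]
  map_smul' c v := by funext j; simp [Finset.mul_sum, mul_assoc, smul_eq_mul]

lemma rmul_row [Fintype n] (Q : Matrix n n' ℍ) (A : Matrix m n ℍ) (i : m) :
    rmul Q (A i) = (A * Q) i := by
  funext j; rw [mul_apply]; rfl

lemma rmul_rmul [Fintype n] [Fintype n'] (Q : Matrix n n' ℍ) (R : Matrix n' u ℍ)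
    (v : n → ℍ) : rmul R (rmul Q v) = rmul (Q * R) v := by
  funext j
  simp only [rmul, LinearMap.coe_mk, AddHom.coe_mk, mul_apply, Finset.sum_mul,
    Finset.mul_sum, mul_assoc]
  rw [Finset.sum_comm]

lemma rmul_one [Fintype n] [DecidableEq n] (v : n → ℍ) :
    rmul (1 : Matrix n n ℍ) v = v := by
  funext j
  simp [rmul, Matrix.one_apply, mul_ite]

lemma rmul_mem_rowSpace [Fintype m] (A : Matrix m n ℍ) (w : m → ℍ) :
    rmul A w ∈ rowSpace A := by
  have : rmul A w = ∑ i, w i • A i := by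
    funext j; simp [rmul, Finset.sum_apply, smul_eq_mul]
  rw [this]
  exact Submodule.sum_mem _ fun i _ =>
    Submodule.smul_mem _ _ (Submodule.subset_span ⟨i, rfl⟩)

lemma rowSpace_mul_le [Fintype m] (P : Matrix m' m ℍ) (A : Matrix m n ℍ) :
    rowSpace (P * A) ≤ rowSpace A := by
  rw [rowSpace, Submodule.span_le]
  rintro _ ⟨i, rfl⟩
  show (P * A) i ∈ rowSpace A
  rw [← rmul_row]
  exact rmul_mem_rowSpace A (P i)

lemma rowSpace_unit_mul [Fintype m] [Fintype m'] [DecidableEq m] (P : Matrix m' m ℍ) (P' : Matrix m m' ℍ)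
    (hP : P' * P = 1) (A : Matrix m n ℍ) :
    rowSpace (P * A) = rowSpace A := by
  refine le_antisymm (rowSpace_mul_le P A) ?_
  have : A = P' * (P * A) := by rw [← Matrix.mul_assoc, hP, Matrix.one_mul]
  conv_lhs => rw [this]
  exact rowSpace_mul_le P' (P * A)

lemma finrank_rowSpace_mul_unit [Fintype n] [Fintype n'] [DecidableEq n] [DecidableEq n']
    (A : Matrix m n ℍ)
    (Q : Matrix n n' ℍ) (Q' : Matrix n' n ℍ) (h1 : Q * Q' = 1) (h2 : Q' * Q = 1) :
    Module.finrank ℍ (rowSpace (A * Q)) = Module.finrank ℍ (rowSpace A) := by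
  let e : (n → ℍ) ≃ₗ[ℍ] (n' → ℍ) :=
    { rmul Q with
      invFun := rmul Q'
      left_inv := fun v => by
        show rmul Q' (rmul Q v) = v
        rw [rmul_rmul, h1, rmul_one]
      right_inv := fun v => by
        show rmul Q (rmul Q' v) = v
        rw [rmul_rmul, h2, rmul_one] }
  have hmap : rowSpace (A * Q) = (rowSpace A).map (rmul Q) := by
    rw [rowSpace, rowSpace, Submodule.map_span]
    congr 1
    rw [← Set.range_comp]
    exact congrArg _ (funext fun i => (rmul_row Q A i).symm)
  rw [hmap]
  exact LinearEquiv.finrank_map_eq e (rowSpace A)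

end Stmt13Aux

namespace Stmt13Aux
open Module LinearMap Submodule
variable {m n m' n' u : Type*}

lemma finrank_rowSpace_zero : Module.finrank ℍ (rowSpace (0 : Matrix m n ℍ)) = 0 := by
  have : rowSpace (0 : Matrix m n ℍ) ≤ ⊥ := by
    rw [rowSpace, Submodule.span_le]
    rintro _ ⟨i, rfl⟩
    simp [Matrix.zero_apply]
    rfl
  rw [le_bot_iff.mp this, finrank_bot]

lemma rowSpace_fromRows (X : Matrix m n ℍ) (Y : Matrix m' n ℍ) :
    rowSpace (fromRows X Y) = rowSpace X ⊔ rowSpace Y := by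
  rw [rowSpace, rowSpace, rowSpace, ← Submodule.span_union]
  congr 1
  have : (fun i => (fromRows X Y) i) = Sum.elim (fun i => X i) (fun i => Y i) := by
    funext i; cases i <;> rfl
  rw [this, Set.Sum.elim_range]

lemma finrank_fromRows [Fintype n] [Fintype m'] (X : Matrix m n ℍ) (F : Matrix m' n ℍ)
    (Fd : Matrix n m' ℍ) (hF : F * Fd * F = F) (hX : X * (Fd * F) = 0) :
    Module.finrank ℍ (rowSpace (fromRows X F)) =
      Module.finrank ℍ (rowSpace X) + Module.finrank ℍ (rowSpace F) := by
  have hU : rowSpace X ≤ LinearMap.ker (rmul (Fd * F)) := by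
    rw [rowSpace, Submodule.span_le]
    rintro _ ⟨i, rfl⟩
    show rmul (Fd * F) (X i) = 0
    rw [rmul_row, hX]
    rfl
  have hV : rowSpace F ≤ LinearMap.ker (rmul (Fd * F) - LinearMap.id) := by
    rw [rowSpace, Submodule.span_le]
    rintro _ ⟨i, rfl⟩
    show rmul (Fd * F) (F i) - F i = 0
    rw [rmul_row, ← Matrix.mul_assoc, hF, sub_self]
  have hdisj : rowSpace X ⊓ rowSpace F = ⊥ := by
    rw [eq_bot_iff]
    rintro v hv
    rw [Submodule.mem_inf] at hv
    have e1 : rmul (Fd * F) v = 0 := hU hv.1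
    have e2 : rmul (Fd * F) v - v = 0 := hV hv.2
    rw [e1, zero_sub, neg_eq_zero] at e2
    simpa using e2
  have key := Submodule.finrank_sup_add_finrank_inf_eq (rowSpace X) (rowSpace F)
  rw [hdisj, finrank_bot, add_zero] at key
  rw [rowSpace_fromRows, key]

lemma finrank_fromColumns [Fintype m] [Fintype n] [Fintype u] (X : Matrix m n ℍ) (K : Matrix m u ℍ)
    (Kd : Matrix u m ℍ) (hK : K * Kd * K = K) (hX : K * Kd * X = 0) :
    Module.finrank ℍ (rowSpace (fromCols X K)) =
      Module.finrank ℍ (rowSpace X) + Module.finrank ℍ (rowSpace K) := by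
  haveI : Module.Finite ℍ ((n ⊕ u) → ℍ) := Module.Finite.pi
  set C := fromCols X K with hC
  set S := rowSpace C with hS
  let g : ((n ⊕ u) → ℍ) →ₗ[ℍ] (n → ℍ) := LinearMap.funLeft ℍ ℍ Sum.inl
  let h : ((n ⊕ u) → ℍ) →ₗ[ℍ] (u → ℍ) := LinearMap.funLeft ℍ ℍ Sum.inr
  have rn := LinearMap.finrank_range_add_finrank_ker (g.domRestrict S)
  have hrange : LinearMap.range (g.domRestrict S) = rowSpace X := by
    rw [LinearMap.range_domRestrict, hS, rowSpace, Submodule.map_span, ← Set.range_comp]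
    rfl
  -- the kernel is equivalent to T = S ⊓ ker g
  set T : Submodule ℍ ((n ⊕ u) → ℍ) := S ⊓ LinearMap.ker g with hT
  have hkerT : Module.finrank ℍ (LinearMap.ker (g.domRestrict S)) = Module.finrank ℍ T := by
    have e : LinearMap.ker (g.domRestrict S) = Submodule.comap S.subtype T := by
      rw [LinearMap.ker_domRestrict, hT, Submodule.comap_inf, Submodule.comap_subtype_self,
        top_inf_eq]
    rw [e]
    exact (Submodule.comapSubtypeEquivOfLe inf_le_left).finrank_eq
  -- finrank T = finrank rowSpace K via h
  have rn2 := LinearMap.finrank_range_add_finrank_ker (h.domRestrict T)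
  have hker2 : LinearMap.ker (h.domRestrict T) = ⊥ := by
    rw [eq_bot_iff]
    rintro ⟨v, hv⟩ hx
    have hg : g v = 0 := (Submodule.mem_inf.mp hv).2
    have hh : h v = 0 := hx
    have hv0 : v = 0 := by
      funext j
      cases j with
      | inl j => exact congrFun hg j
      | inr j => exact congrFun hh j
    exact (Submodule.mem_bot ℍ).mpr (Subtype.ext hv0)
  have hrange2 : LinearMap.range (h.domRestrict T) = rowSpace K := by
    rw [LinearMap.range_domRestrict]
    apply le_antisymm
    · refine le_trans (Submodule.map_mono (inf_le_left : T ≤ S)) ?_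
      rw [hS, rowSpace, Submodule.map_span, ← Set.range_comp]
      exact le_of_eq rfl
    · rw [rowSpace, Submodule.span_le]
      rintro _ ⟨j, rfl⟩
      rw [SetLike.mem_coe, Submodule.mem_map]
      refine ⟨rmul C ((K * Kd) j), Submodule.mem_inf.mpr ⟨rmul_mem_rowSpace C _, ?_⟩, ?_⟩
      · rw [LinearMap.mem_ker]
        have : g (rmul C ((K * Kd) j)) = rmul X ((K * Kd) j) := rfl
        rw [this, rmul_row, hX]
        rfl
      · have : h (rmul C ((K * Kd) j)) = rmul K ((K * Kd) j) := rfl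
        rw [this, rmul_row, hK]
  rw [hrange, hkerT] at rn
  rw [hrange2, hker2, finrank_bot, add_zero] at rn2
  rw [← rn, rn2]

end Stmt13Aux

section Stmt13Main
open Stmt13Aux

lemma qrank_eq {m n : Type*} (A : Matrix m n (Quaternion ℝ)) :
    qrank A = Module.finrank (Quaternion ℝ) (rowSpace A) := rfl

/-- the rank identity
`r [A, M L_F; R_K N, 0] = r [A M 0; N 0 K; 0 F 0] - r K - r F`. -/
theorem stmt13 {p q s t r u : ℕ}
    (A : QM p q) (M : QM p s) (F : QM t s) (N : QM r q) (K : QM r u)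
    (Fd : QM s t) (hFd : IsMP F Fd)
    (Kd : QM u r) (hKd : IsMP K Kd) :
    (qrank (fromBlocks A (M * (1 - Fd * F)) ((1 - K * Kd) * N) 0) : ℤ) =
      (qrank (fromBlocks
          (fromBlocks A M N 0)
          (fromRows (0 : QM p u) K)
          (fromCols (0 : QM t q) F) 0) : ℤ)
        - (qrank K : ℤ) - (qrank F : ℤ) := by
  obtain ⟨hF1, hF2, -, -⟩ := hFd
  obtain ⟨hK1, hK2, -, -⟩ := hKd
  set C : Matrix (Fin p ⊕ Fin r) (Fin q ⊕ Fin s) (Quaternion ℝ) :=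
    fromBlocks A (M * (1 - Fd * F)) ((1 - K * Kd) * N) 0 with hCdef
  set T0 : Matrix (Fin p ⊕ Fin r) (Fin q ⊕ Fin s) (Quaternion ℝ) := fromBlocks A M N 0 with hT0
  set Kb : Matrix (Fin p ⊕ Fin r) (Fin u) (Quaternion ℝ) := fromRows (0 : QM p u) K with hKb
  set Fb : Matrix (Fin t) (Fin q ⊕ Fin s) (Quaternion ℝ) := fromCols (0 : QM t q) F with hFb
  set B := fromBlocks T0 Kb Fb 0 with hB
  -- elementary row/column operations
  set E : Matrix (Fin p ⊕ Fin r) (Fin t) (Quaternion ℝ) := fromRows (-(M * Fd)) 0 with hE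
  set P : Matrix ((Fin p ⊕ Fin r) ⊕ Fin t) ((Fin p ⊕ Fin r) ⊕ Fin t) (Quaternion ℝ) :=
    fromBlocks 1 E 0 1 with hP
  set P' : Matrix ((Fin p ⊕ Fin r) ⊕ Fin t) ((Fin p ⊕ Fin r) ⊕ Fin t) (Quaternion ℝ) :=
    fromBlocks 1 (-E) 0 1 with hP'
  set G : Matrix (Fin u) (Fin q ⊕ Fin s) (Quaternion ℝ) := fromCols (-(Kd * N)) 0 with hG
  set Q : Matrix ((Fin q ⊕ Fin s) ⊕ Fin u) ((Fin q ⊕ Fin s) ⊕ Fin u) (Quaternion ℝ) :=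
    fromBlocks 1 0 G 1 with hQ
  set Q' : Matrix ((Fin q ⊕ Fin s) ⊕ Fin u) ((Fin q ⊕ Fin s) ⊕ Fin u) (Quaternion ℝ) :=
    fromBlocks 1 0 (-G) 1 with hQ'
  have hP'P : P' * P = 1 := by
    rw [hP, hP', Matrix.fromBlocks_multiply]
    simp [Matrix.fromBlocks_one]
  have hQQ' : Q * Q' = 1 := by
    rw [hQ, hQ', Matrix.fromBlocks_multiply]
    simp [Matrix.fromBlocks_one]
  have hQ'Q : Q' * Q = 1 := by
    rw [hQ, hQ', Matrix.fromBlocks_multiply]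
    simp [Matrix.fromBlocks_one]
  -- the key elimination identity
  have hEFb : E * Fb = fromBlocks (0 : QM p q) (-(M * Fd * F)) 0 0 := by
    rw [hE, hFb, Matrix.fromRows_mul_fromCols]
    simp [Matrix.mul_assoc]
  have hKbG : Kb * G = fromBlocks (0 : QM p q) 0 (-(K * (Kd * N))) 0 := by
    rw [hKb, hG, Matrix.fromRows_mul_fromCols]
    simp
  have key : P * B * Q = fromBlocks C Kb Fb 0 := by
    rw [hP, hB, Matrix.fromBlocks_multiply]
    simp only [Matrix.one_mul, Matrix.zero_mul, Matrix.mul_zero, Matrix.mul_one,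
      add_zero, zero_add]
    rw [hQ, Matrix.fromBlocks_multiply]
    simp only [Matrix.one_mul, Matrix.zero_mul, Matrix.mul_zero, Matrix.mul_one,
      add_zero, zero_add]
    rw [hEFb, hKbG, hT0, Matrix.fromBlocks_add, Matrix.fromBlocks_add, hCdef]
    have e2 : M + -(M * Fd * F) + 0 = M * (1 - Fd * F) := by
      simp [Matrix.mul_sub, Matrix.mul_add, Matrix.mul_one, Matrix.mul_neg,
        Matrix.mul_assoc, sub_eq_add_neg]
    have e3 : N + 0 + -(K * (Kd * N)) = (1 - K * Kd) * N := by
      simp [Matrix.sub_mul, Matrix.add_mul, Matrix.one_mul, Matrix.neg_mul,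
        Matrix.mul_assoc, sub_eq_add_neg]
    rw [e2, e3]
    simp
  -- rank is preserved by the invertible transformations
  have hq1 : qrank B = qrank (fromBlocks C Kb Fb 0) := by
    rw [← key, qrank_eq, qrank_eq, finrank_rowSpace_mul_unit (P * B) Q Q' hQQ' hQ'Q,
      rowSpace_unit_mul P P' hP'P]
  -- split off F
  set Fbig : Matrix (Fin t) ((Fin q ⊕ Fin s) ⊕ Fin u) (Quaternion ℝ) := fromCols Fb 0 with hFbig
  set Fbigd : Matrix ((Fin q ⊕ Fin s) ⊕ Fin u) (Fin t) (Quaternion ℝ) :=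
    fromRows (fromRows (0 : QM q t) Fd) (0 : QM u t) with hFbigd
  have hFbig_mul : Fbig * Fbigd = F * Fd := by
    rw [hFbig, hFbigd, Matrix.fromCols_mul_fromRows, hFb,
      Matrix.fromCols_mul_fromRows]
    simp
  have hFbig1 : Fbig * Fbigd * Fbig = Fbig := by
    rw [hFbig_mul, hFbig, Matrix.mul_fromCols, hFb, Matrix.mul_fromCols]
    simp [hF1]
  have hXF : (fromCols C Kb) * (Fbigd * Fbig) = 0 := by
    rw [← Matrix.mul_assoc]
    have h0 : (fromCols C Kb) * Fbigd = 0 := by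
      rw [hFbigd, Matrix.fromCols_mul_fromRows, Matrix.mul_zero, add_zero, hCdef,
        Matrix.fromBlocks_mul_fromRows]
      have : M * (1 - Fd * F) * Fd = 0 := by
        rw [Matrix.mul_assoc, Matrix.sub_mul, Matrix.one_mul, hF2, sub_self,
          Matrix.mul_zero]
      simp [this]
    rw [h0, Matrix.zero_mul]
  have hsplitF : qrank (fromBlocks C Kb Fb 0) =
      qrank (fromCols C Kb) + qrank Fbig := by
    rw [show fromBlocks C Kb Fb 0 = fromRows (fromCols C Kb) Fbig by
      rw [hFbig]; exact (Matrix.fromRows_fromCols_eq_fromBlocks C Kb Fb 0).symm]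
    exact finrank_fromRows _ Fbig Fbigd hFbig1 hXF
  have hqFbig : qrank Fbig = qrank F := by
    have h1 : qrank Fbig = qrank Fb + qrank (0 : QM t u) := by
      rw [hFbig, qrank_eq, qrank_eq, qrank_eq]
      exact finrank_fromColumns Fb (0 : QM t u) (0 : Matrix (Fin u) (Fin t) (Quaternion ℝ))
        (by simp) (by simp)
    have h2 : qrank Fb = qrank (0 : QM t q) + qrank F := by
      rw [hFb, qrank_eq, qrank_eq, qrank_eq]
      exact finrank_fromColumns (0 : QM t q) F Fd hF1 (by simp)
    have h3 : qrank (0 : QM t u) = 0 := finrank_rowSpace_zero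
    have h4 : qrank (0 : QM t q) = 0 := finrank_rowSpace_zero
    omega
  -- split off K
  set Kbd : Matrix (Fin u) (Fin p ⊕ Fin r) (Quaternion ℝ) := fromCols (0 : QM u p) Kd with hKbd
  have hKb_mul : Kb * Kbd = fromBlocks (0 : QM p p) 0 0 (K * Kd) := by
    rw [hKb, hKbd, Matrix.fromRows_mul_fromCols]
    simp
  have hKb1 : Kb * Kbd * Kb = Kb := by
    rw [hKb_mul, hKb, Matrix.fromBlocks_mul_fromRows]
    simp [hK1]
  have hXK : Kb * Kbd * C = 0 := by
    rw [hKb_mul, hCdef, Matrix.fromBlocks_multiply]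
    have : K * Kd * ((1 - K * Kd) * N) = 0 := by
      rw [← Matrix.mul_assoc, Matrix.mul_sub, Matrix.mul_one,
        ← Matrix.mul_assoc (K * Kd) K Kd, hK1, sub_self, Matrix.zero_mul]
    simp [this]
  have hsplitK : qrank (fromCols C Kb) = qrank C + qrank Kb := by
    rw [qrank_eq, qrank_eq, qrank_eq]
    exact finrank_fromColumns C Kb Kbd hKb1 hXK
  have hqKb : qrank Kb = qrank K := by
    have h1 : qrank Kb = qrank (0 : QM p u) + qrank K := by
      rw [hKb, qrank_eq, qrank_eq, qrank_eq]
      exact finrank_fromRows (0 : QM p u) K Kd hK1 (by simp)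
    have h2 : qrank (0 : QM p u) = 0 := finrank_rowSpace_zero
    omega
  have : qrank B = qrank C + qrank K + qrank F := by omega
  rw [this]
  push_cast
  ring

end Stmt13Main
end

section
/- Let B = B0 + B1ε ∈ DQ^{k×l} and C = C0 + C1ε ∈ DQ^{n×l} be dual quaternion matrices. Then the dual quaternion matrix equation YB = C has a solution Y ∈ DQ^{n×k} if and only if r[B0; C0] = r(B0) and r[C1 C0; B0 0; B1 B0] = r[B0 0; B1 B0], where the displayed matrices are block matrices with the indicated quaternion blocks and zero blocks of compatible sizes. -/
open Matrix

section Aux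

local notation "K" => Quaternion ℝ

/-- Key rank lemma: `X A = D` is solvable iff the stacked matrix has the same
rank as `A`. -/
lemma solvable_iff_qrank {p m q : Type*} [Fintype p] [Fintype m]
    (A : Matrix p q K) (D : Matrix m q K) :
    (∃ X : Matrix m p K, X * A = D) ↔ qrank (fromRows A D) = qrank A := by
  classical
  set S : Submodule K (q → K) :=
    Submodule.span K (Set.range (fun i : p => fun j : q => A i j)) with hS
  set SD : Submodule K (q → K) :=
    Submodule.span K (Set.range (fun i : m => fun j : q => D i j)) with hSD
  have hrange : (Set.range (fun i : p ⊕ m => fun j : q => fromRows A D i j)) =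
      (Set.range (fun i : p => fun j : q => A i j)) ∪
      (Set.range (fun i : m => fun j : q => D i j)) := by
    have he : (fun i : p ⊕ m => fun j : q => fromRows A D i j) =
        Sum.elim (fun i : p => fun j : q => A i j) (fun i : m => fun j : q => D i j) := by
      funext i
      cases i <;> rfl
    rw [he, Set.Sum.elim_range]
  have hT : Submodule.span K
      (Set.range (fun i : p ⊕ m => fun j : q => fromRows A D i j)) = S ⊔ SD := by
    rw [hrange, Submodule.span_union]
  -- solvability iff each row of D lies in S
  have hsolv : (∃ X : Matrix m p K, X * A = D) ↔ ∀ i : m, (fun j => D i j) ∈ S := by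
    constructor
    · rintro ⟨X, rfl⟩ i
      have : (fun j => (X * A) i j) = ∑ t : p, X i t • (fun j => A t j) := by
        funext j
        simp [Matrix.mul_apply]
      rw [this]
      exact Submodule.sum_mem _ fun t _ =>
        Submodule.smul_mem _ _ (Submodule.subset_span ⟨t, rfl⟩)
    · intro h
      have h' : ∀ i : m, ∃ c : p → K, ∑ t, c t • (fun j => A t j) = fun j => D i j :=
        fun i => (Submodule.mem_span_range_iff_exists_fun K).mp (h i)
      choose X hX using h'
      refine ⟨Matrix.of X, ?_⟩
      apply Matrix.ext
      intro i j
      have h2 := congrFun (hX i) j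
      simp only [Finset.sum_apply, Pi.smul_apply, smul_eq_mul] at h2
      simpa [Matrix.mul_apply] using h2
  rw [hsolv]
  show _ ↔ Module.finrank K ↥(Submodule.span K _) = Module.finrank K ↥S
  rw [hT]
  constructor
  · intro h
    have hle : SD ≤ S := by
      rw [hSD, Submodule.span_le]
      rintro _ ⟨i, rfl⟩
      exact h i
    rw [sup_eq_left.mpr hle]
  · intro h
    have hfd : FiniteDimensional K ↥(S ⊔ SD) := by
      rw [← Submodule.span_union, ← hrange]
      exact FiniteDimensional.span_of_finite K (Set.finite_range _)
    have hEq : S = S ⊔ SD :=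
      Submodule.eq_of_le_of_finrank_eq le_sup_left h.symm
    intro i
    rw [hEq]
    exact Submodule.mem_sup_right (Submodule.subset_span ⟨i, rfl⟩)

lemma dm_apply_fst {p q : ℕ} (A0 A1 : QM p q) (i : Fin p) (j : Fin q) :
    ((dm A0 A1) i j).fst = A0 i j := by
  simp [dm]

lemma dm_apply_snd {p q : ℕ} (A0 A1 : QM p q) (i : Fin p) (j : Fin q) :
    ((dm A0 A1) i j).snd = A1 i j := by
  simp [dm]

lemma mul_dm_fst {k l n : ℕ} (Y : Matrix (Fin n) (Fin k) (DualNumber K))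
    (B0 B1 : QM k l) (i : Fin n) (j : Fin l) :
    ((Y * dm B0 B1) i j).fst = (Y.map TrivSqZeroExt.fst * B0) i j := by
  simp [Matrix.mul_apply, TrivSqZeroExt.fst_sum, dm_apply_fst]

lemma mul_dm_snd {k l n : ℕ} (Y : Matrix (Fin n) (Fin k) (DualNumber K))
    (B0 B1 : QM k l) (i : Fin n) (j : Fin l) :
    ((Y * dm B0 B1) i j).snd =
      (Y.map TrivSqZeroExt.fst * B1 + Y.map TrivSqZeroExt.snd * B0) i j := by
  simp [Matrix.mul_apply, TrivSqZeroExt.snd_sum, TrivSqZeroExt.snd_mul,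
    dm_apply_fst, dm_apply_snd, Finset.sum_add_distrib]

lemma dq_iff {k l n : ℕ} (B0 B1 : QM k l) (C0 C1 : QM n l) :
    (∃ Y : Matrix (Fin n) (Fin k) (DualNumber K), Y * dm B0 B1 = dm C0 C1) ↔
    (∃ Y0 Y1 : QM n k, Y0 * B0 = C0 ∧ Y0 * B1 + Y1 * B0 = C1) := by
  constructor
  · rintro ⟨Y, hY⟩
    refine ⟨Y.map TrivSqZeroExt.fst, Y.map TrivSqZeroExt.snd, ?_, ?_⟩
    · apply Matrix.ext
      intro i j
      rw [← mul_dm_fst, hY, dm_apply_fst]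
    · apply Matrix.ext
      intro i j
      rw [← mul_dm_snd, hY, dm_apply_snd]
  · rintro ⟨Y0, Y1, h1, h2⟩
    refine ⟨dm Y0 Y1, ?_⟩
    have hf : (dm Y0 Y1).map TrivSqZeroExt.fst = Y0 :=
      Matrix.ext fun i j => dm_apply_fst Y0 Y1 i j
    have hs : (dm Y0 Y1).map TrivSqZeroExt.snd = Y1 :=
      Matrix.ext fun i j => dm_apply_snd Y0 Y1 i j
    apply Matrix.ext
    intro i j
    refine TrivSqZeroExt.ext ?_ ?_
    · rw [mul_dm_fst, dm_apply_fst, hf, h1]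
    · rw [mul_dm_snd, dm_apply_snd, hf, hs, h2]

lemma block_iff {k l n : ℕ} (B0 B1 : QM k l) (C0 C1 : QM n l) :
    (∃ Y0 Y1 : QM n k, Y0 * B0 = C0 ∧ Y0 * B1 + Y1 * B0 = C1) ↔
    (∃ W : Matrix (Fin n) (Fin k ⊕ Fin k) K,
      W * fromBlocks B0 0 B1 B0 = fromCols C1 C0) := by
  constructor
  · rintro ⟨Y0, Y1, h1, h2⟩
    refine ⟨fromCols Y1 Y0, ?_⟩
    rw [fromCols_mul_fromBlocks]
    rw [add_comm (Y1 * B0) (Y0 * B1), h2, Matrix.mul_zero, zero_add, h1]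
  · rintro ⟨W, hW⟩
    rw [← fromCols_toCols W, fromCols_mul_fromBlocks] at hW
    refine ⟨toCols₂ W, toCols₁ W, ?_, ?_⟩
    · have := congrArg toCols₂ hW
      simpa [toCols₂_fromCols] using this
    · have := congrArg toCols₁ hW
      rw [toCols₁_fromCols, toCols₁_fromCols] at this
      rw [add_comm] at this
      exact this

lemma qrank_fromRows_comm {p m q : Type*} (A : Matrix p q K) (D : Matrix m q K) :
    qrank (fromRows A D) = qrank (fromRows D A) := by
  have h1 : (fun i : p ⊕ m => fun j : q => fromRows A D i j) =
      Sum.elim (fun i : p => fun j : q => A i j) (fun i : m => fun j : q => D i j) := by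
    funext i; cases i <;> rfl
  have h2 : (fun i : m ⊕ p => fun j : q => fromRows D A i j) =
      Sum.elim (fun i : m => fun j : q => D i j) (fun i : p => fun j : q => A i j) := by
    funext i; cases i <;> rfl
  have hspan : Submodule.span K (Set.range fun i : p ⊕ m => fun j : q => fromRows A D i j) =
      Submodule.span K (Set.range fun i : m ⊕ p => fun j : q => fromRows D A i j) := by
    rw [h1, h2, Set.Sum.elim_range, Set.Sum.elim_range, Set.union_comm]
  unfold qrank
  rw [hspan]

end Aux

/-- solvability of the dual quaternion matrix equation `Y B = C`
in terms of rank equalities. -/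
theorem stmt15 {k l n : ℕ}
    (B0 B1 : QM k l) (C0 C1 : QM n l) :
    (∃ Y : Matrix (Fin n) (Fin k) (DualNumber (Quaternion ℝ)),
        Y * dm B0 B1 = dm C0 C1) ↔
      (qrank (fromRows B0 C0) = qrank B0 ∧
       qrank (fromRows (fromCols C1 C0) (fromBlocks B0 0 B1 B0)) =
         qrank (fromBlocks B0 0 B1 B0)) := by
  rw [dq_iff]
  constructor
  · rintro ⟨Y0, Y1, h1, h2⟩
    refine ⟨(solvable_iff_qrank B0 C0).mp ⟨Y0, h1⟩, ?_⟩
    rw [qrank_fromRows_comm]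
    exact (solvable_iff_qrank _ _).mp ((block_iff B0 B1 C0 C1).mp ⟨Y0, Y1, h1, h2⟩)
  · rintro ⟨-, h2⟩
    rw [qrank_fromRows_comm] at h2
    exact (block_iff B0 B1 C0 C1).mpr ((solvable_iff_qrank _ _).mpr h2)
end
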